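/- arXiv:2005.13442 — 6 statements merged into one kernel-verified Lean document; each statement's English description precedes it below -/
import Mathlib

section
/- If g : ℝ → X is Stepanov-bounded with exponent p > 1 (i.e., sup_{t∈ℝ} (∫_t^{t+1} ‖g(s)‖^p ds)^{1/p} =: ‖g‖_{BS^p} < ∞), and M, δ > 0, then for every t ∈ ℝ, ∫_{-∞}^t M e^{-δ(t-s)} ‖g(s)‖ ds ≤ M ‖g‖_{BS^p} ((e^{δq}-1)/(δq))^{1/q} · 1/(e^δ - 1), where q is the conjugate exponent of p. -/
open MeasureTheory Set Filter
open scoped ENNReal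

/-- Exponential integral over an interval. -/
lemma exp_integral_piece (c t a b : ℝ) (hc : 0 < c) :
    ∫ s in a..b, Real.exp (c * s - c * t) =
      Real.exp (c * b - c * t) / c - Real.exp (c * a - c * t) / c := by
  have hderiv : ∀ s : ℝ, HasDerivAt (fun u => Real.exp (c * u - c * t) / c)
      (Real.exp (c * s - c * t)) s := by
    intro s
    have h1 : HasDerivAt (fun u : ℝ => c * u - c * t) c s := by
      simpa using ((hasDerivAt_id s).const_mul c).sub_const (c * t)
    have h2 := h1.exp.div_const c
    have : Real.exp (c * s - c * t) * c / c = Real.exp (c * s - c * t) := by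
      field_simp
    simpa [this] using h2
  exact intervalIntegral.integral_eq_sub_of_hasDerivAt (fun s _ => hderiv s)
    ((Real.continuous_exp.comp
      ((continuous_const.mul continuous_id).sub continuous_const)).intervalIntegrable a b)

/-- For a Stepanov-`p`-bounded function `g` (with Stepanov bound `C`),
`∫_{-∞}^t M e^{-δ(t-s)} ‖g(s)‖ ds ≤ M C ((e^{δq}-1)/(δq))^{1/q} / (e^δ - 1)`. -/
theorem stepanov_convolution_bound {X : Type*} [NormedAddCommGroup X]
    (p q M δ C : ℝ) (hp : 1 < p) (hpq : 1 / p + 1 / q = 1)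
    (hM : 0 < M) (hδ : 0 < δ) (g : ℝ → X)
    (hmeas : AEStronglyMeasurable g (volume : Measure ℝ))
    (hloc : ∀ t : ℝ, IntegrableOn (fun s => ‖g s‖ ^ p) (Ioc t (t + 1)))
    (hC : ∀ t : ℝ, (∫ s in Ioc t (t + 1), ‖g s‖ ^ p) ^ (1 / p) ≤ C) :
    ∀ t : ℝ, (∫ s in Iic t, M * Real.exp (-δ * (t - s)) * ‖g s‖) ≤
      M * C * ((Real.exp (δ * q) - 1) / (δ * q)) ^ (1 / q) * (1 / (Real.exp δ - 1)) := by
  -- basic facts about the exponents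
  have hpq' : Real.HolderConjugate p q := by
    refine Real.holderConjugate_iff.mpr ⟨hp, ?_⟩
    simpa [one_div] using hpq
  have hq1 : 1 < q := hpq'.symm.lt
  have hq0 : 0 < q := lt_trans zero_lt_one hq1
  have hp0 : 0 < p := lt_trans zero_lt_one hp
  have hδq : 0 < δ * q := mul_pos hδ hq0
  have hC0 : 0 ≤ C := le_trans (Real.rpow_nonneg
    (integral_nonneg fun s => Real.rpow_nonneg (norm_nonneg _) p) _) (hC 0)
  set A : ℝ := ((Real.exp (δ * q) - 1) / (δ * q)) ^ (1 / q) with hA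
  have hfac : 0 ≤ (Real.exp (δ * q) - 1) / (δ * q) :=
    div_nonneg (by linarith [Real.one_lt_exp_iff.mpr hδq]) hδq.le
  have hA0 : 0 ≤ A := Real.rpow_nonneg hfac _
  have hed : 1 < Real.exp δ := Real.one_lt_exp_iff.mpr hδ
  have hRHS0 : 0 ≤ M * C * A * (1 / (Real.exp δ - 1)) :=
    mul_nonneg (mul_nonneg (mul_nonneg hM.le hC0) hA0)
      (div_nonneg zero_le_one (by linarith))
  intro t
  -- the pieces
  set I : ℕ → Set ℝ := fun n => Ioc (t - (n + 1 : ℕ)) (t - n) with hI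
  have hcover : Iic t = ⋃ n : ℕ, I n := by
    ext x
    simp only [hI, mem_Iic, mem_iUnion, mem_Ioc]
    constructor
    · intro hx
      refine ⟨⌊t - x⌋₊, ?_, ?_⟩
      · have h1 := Nat.lt_floor_add_one (t - x)
        push_cast
        linarith
      · have h2 := Nat.floor_le (by linarith : (0 : ℝ) ≤ t - x)
        linarith
    · rintro ⟨n, _, h2⟩
      have : (0 : ℝ) ≤ n := Nat.cast_nonneg n
      linarith
  have hdisj : Pairwise (Function.onFun Disjoint I) := by
    intro m n hmn
    simp only [hI, Function.onFun]
    rw [Set.Ioc_disjoint_Ioc]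
    rcases hmn.lt_or_gt with h | h
    · have : ((m : ℝ) + 1) ≤ n := by exact_mod_cast h
      exact (min_le_right _ _).trans (le_trans (by push_cast; linarith) (le_max_left _ _))
    · have : ((n : ℝ) + 1) ≤ m := by exact_mod_cast h
      exact (min_le_left _ _).trans (le_trans (by push_cast; linarith) (le_max_right _ _))
  -- the integrand and its nonnegativity / measurability
  set f : ℝ → ℝ := fun s => M * Real.exp (-δ * (t - s)) * ‖g s‖ with hf
  have hf0 : 0 ≤ᵐ[volume.restrict (Iic t)] f :=
    Filter.Eventually.of_forall fun s => by
      exact mul_nonneg (mul_nonneg hM.le (Real.exp_pos _).le) (norm_nonneg _)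
  have hcont1 : Continuous fun s : ℝ => Real.exp (-δ * (t - s)) :=
    Real.continuous_exp.comp (continuous_const.mul (continuous_const.sub continuous_id))
  have hfc : Continuous fun s : ℝ => M * Real.exp (-δ * (t - s)) :=
    continuous_const.mul hcont1
  have hfm : AEStronglyMeasurable f (volume.restrict (Iic t)) :=
    (hfc.aestronglyMeasurable.mul (hmeas.norm.restrict))
  -- key lintegral bound on each piece
  have piece : ∀ n : ℕ, (∫⁻ s in I n, ENNReal.ofReal (f s)) ≤
      ENNReal.ofReal (M * C * Real.exp (-δ) * A) * ENNReal.ofReal (Real.exp (-δ)) ^ n := by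
    intro n
    set a : ℝ := t - (n + 1 : ℕ) with ha
    have hab : t - (n : ℕ) = a + 1 := by push_cast [ha]; ring
    -- split off the constant M
    have hsplit : ∀ s : ℝ, ENNReal.ofReal (f s) = ENNReal.ofReal M *
        (ENNReal.ofReal (Real.exp (-δ * (t - s))) * ENNReal.ofReal ‖g s‖) := by
      intro s
      rw [hf, ENNReal.ofReal_mul (mul_nonneg hM.le (Real.exp_pos _).le),
        ENNReal.ofReal_mul hM.le, mul_assoc]
    have h1 : (∫⁻ s in I n, ENNReal.ofReal (f s)) = ENNReal.ofReal M *
        ∫⁻ s in I n, ENNReal.ofReal (Real.exp (-δ * (t - s))) * ENNReal.ofReal ‖g s‖ := by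
      simp only [hsplit]
      exact lintegral_const_mul' _ _ ENNReal.ofReal_ne_top
    -- Hölder
    have hmeas1 : AEMeasurable (fun s => ENNReal.ofReal (Real.exp (-δ * (t - s))))
        (volume.restrict (I n)) :=
      (ENNReal.measurable_ofReal.comp hcont1.measurable).aemeasurable
    have hmeas2 : AEMeasurable (fun s => ENNReal.ofReal ‖g s‖) (volume.restrict (I n)) :=
      hmeas.norm.restrict.aemeasurable.ennreal_ofReal
    have holder := ENNReal.lintegral_mul_le_Lp_mul_Lq (volume.restrict (I n)) hpq'.symm
      hmeas1 hmeas2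
    -- compute the exponential factor
    have hpt : ∀ s : ℝ, ENNReal.ofReal (Real.exp (-δ * (t - s))) ^ q =
        ENNReal.ofReal (Real.exp (δ * q * s - δ * q * t)) := by
      intro s
      rw [ENNReal.ofReal_rpow_of_pos (Real.exp_pos _), ← Real.exp_mul]
      congr 1
      ring_nf
    have hexp_eq : (∫⁻ s in I n, ENNReal.ofReal (Real.exp (-δ * (t - s))) ^ q) =
        ENNReal.ofReal (∫ s in I n, Real.exp (δ * q * s - δ * q * t)) := by
      simp only [hpt]
      exact (ofReal_integral_eq_lintegral_ofReal
        ((Real.continuous_exp.comp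
          ((continuous_const.mul continuous_id).sub continuous_const)).integrableOn_Ioc)
        (Filter.Eventually.of_forall fun s => (Real.exp_pos _).le)).symm
    have hval : (∫ s in I n, Real.exp (δ * q * s - δ * q * t)) =
        Real.exp (-δ * (n + 1)) ^ q * ((Real.exp (δ * q) - 1) / (δ * q)) := by
      rw [hI]
      have hle : t - ((n : ℕ) + 1 : ℕ) ≤ t - (n : ℕ) := by
        push_cast; linarith
      rw [← intervalIntegral.integral_of_le hle, exp_integral_piece (δ * q) t _ _ hδq]
      push_cast
      have e1 : Real.exp (δ * q * (t - ((n : ℝ))) - δ * q * t) =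
          Real.exp (-δ * ((n : ℝ) + 1) * q) * Real.exp (δ * q) := by
        rw [← Real.exp_add]; congr 1; ring
      have e2 : Real.exp (δ * q * (t - ((n : ℝ) + 1)) - δ * q * t) =
          Real.exp (-δ * ((n : ℝ) + 1) * q) := by congr 1; ring
      rw [e1, e2, ← Real.exp_mul]
      field_simp
    -- bound on the g factor
    have hIn : I n = Ioc a (a + 1) := by
      simp only [hI]
      rw [← hab, ha]
    have hg_eq : (∫⁻ s in I n, ENNReal.ofReal ‖g s‖ ^ p) =
        ENNReal.ofReal (∫ s in Ioc a (a + 1), ‖g s‖ ^ p) := by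
      rw [hIn]
      have hptg : ∀ s : ℝ, ENNReal.ofReal ‖g s‖ ^ p = ENNReal.ofReal (‖g s‖ ^ p) := fun s =>
        ENNReal.ofReal_rpow_of_nonneg (norm_nonneg _) hp0.le
      simp only [hptg]
      exact (ofReal_integral_eq_lintegral_ofReal (hloc a)
        (Filter.Eventually.of_forall fun s => Real.rpow_nonneg (norm_nonneg _) _)).symm
    have hgint0 : 0 ≤ ∫ s in Ioc a (a + 1), ‖g s‖ ^ p :=
      integral_nonneg fun s => Real.rpow_nonneg (norm_nonneg _) _
    have hg_le : (∫⁻ s in I n, ENNReal.ofReal ‖g s‖ ^ p) ^ (1 / p) ≤ ENNReal.ofReal C := by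
      rw [hg_eq, ENNReal.ofReal_rpow_of_nonneg hgint0 (by positivity)]
      exact ENNReal.ofReal_le_ofReal (hC a)
    have hexpv0 : 0 ≤ Real.exp (-δ * (n + 1)) ^ q * ((Real.exp (δ * q) - 1) / (δ * q)) :=
      mul_nonneg (Real.rpow_nonneg (Real.exp_pos _).le _) hfac
    have hexp_le : (∫⁻ s in I n, ENNReal.ofReal (Real.exp (-δ * (t - s))) ^ q) ^ (1 / q) =
        ENNReal.ofReal (Real.exp (-δ * (n + 1)) * A) := by
      rw [hexp_eq, hval, ENNReal.ofReal_rpow_of_nonneg hexpv0 (by positivity)]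
      congr 1
      rw [Real.mul_rpow (Real.rpow_nonneg (Real.exp_pos _).le _) hfac,
        ← Real.rpow_mul (Real.exp_pos _).le, mul_one_div, div_self hq0.ne',
        Real.rpow_one, hA]
    -- put it together
    calc (∫⁻ s in I n, ENNReal.ofReal (f s))
        = ENNReal.ofReal M *
          ∫⁻ s in I n, ENNReal.ofReal (Real.exp (-δ * (t - s))) * ENNReal.ofReal ‖g s‖ := h1
      _ ≤ ENNReal.ofReal M *
          ((∫⁻ s in I n, ENNReal.ofReal (Real.exp (-δ * (t - s))) ^ q) ^ (1 / q) *
            (∫⁻ s in I n, ENNReal.ofReal ‖g s‖ ^ p) ^ (1 / p)) := by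
          exact mul_le_mul_right holder _
      _ ≤ ENNReal.ofReal M * (ENNReal.ofReal (Real.exp (-δ * (n + 1)) * A) *
            ENNReal.ofReal C) :=
          mul_le_mul_right (mul_le_mul' (le_of_eq hexp_le) hg_le) _
      _ = ENNReal.ofReal (M * C * Real.exp (-δ) * A) * ENNReal.ofReal (Real.exp (-δ)) ^ n := by
          rw [← ENNReal.ofReal_pow (Real.exp_pos _).le,
            ← ENNReal.ofReal_mul (mul_nonneg (Real.exp_pos _).le hA0),
            ← ENNReal.ofReal_mul hM.le,
            ← ENNReal.ofReal_mul
              (mul_nonneg (mul_nonneg (mul_nonneg hM.le hC0) (Real.exp_pos _).le) hA0)]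
          congr 1
          rw [← Real.exp_nat_mul, show -δ * ((n : ℝ) + 1) = -δ + (n : ℝ) * -δ by ring,
            Real.exp_add]
          ring
  -- sum the pieces
  have hgeo : (∑' n : ℕ, ENNReal.ofReal (M * C * Real.exp (-δ) * A) *
      ENNReal.ofReal (Real.exp (-δ)) ^ n) = ENNReal.ofReal (M * C * A * (1 / (Real.exp δ - 1))) := by
    rw [ENNReal.tsum_mul_left, ENNReal.tsum_geometric]
    have h1 : (1 : ℝ≥0∞) - ENNReal.ofReal (Real.exp (-δ)) =
        ENNReal.ofReal (1 - Real.exp (-δ)) := by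
      rw [ENNReal.ofReal_sub _ (Real.exp_pos _).le, ENNReal.ofReal_one]
    have hpos : 0 < 1 - Real.exp (-δ) := by
      have : Real.exp (-δ) < 1 := Real.exp_lt_one_iff.mpr (by linarith)
      linarith
    rw [h1, ← ENNReal.ofReal_inv_of_pos hpos, ← ENNReal.ofReal_mul (by positivity)]
    congr 1
    rw [Real.exp_neg]
    have he0 : Real.exp δ ≠ 0 := (Real.exp_pos _).ne'
    have he1 : Real.exp δ - 1 ≠ 0 := by linarith
    field_simp
  -- total lintegral bound
  have key : (∫⁻ s in Iic t, ENNReal.ofReal (f s)) ≤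
      ENNReal.ofReal (M * C * A * (1 / (Real.exp δ - 1))) := by
    rw [hcover, lintegral_iUnion (fun n => measurableSet_Ioc) hdisj]
    rw [← hgeo]
    exact ENNReal.tsum_le_tsum piece
  -- conclude
  have hgoal : (∫ s in Iic t, M * Real.exp (-δ * (t - s)) * ‖g s‖) = ∫ s in Iic t, f s := rfl
  rw [hgoal, integral_eq_lintegral_of_nonneg_ae hf0 hfm]
  exact ENNReal.toReal_le_of_le_ofReal hRHS0 key
end

section
/- Let μ be a positive measure on the Borel σ-field of ℝ with μ(ℝ) = ∞, μ([a,b]) < ∞ for all a ≤ b, and satisfying: for all τ ∈ ℝ there exist β > 0 and a bounded interval I such that μ(A + τ) ≤ β μ(A) whenever A is Borel and A ∩ I = ∅. Then the space of μ-S^p-ergodic functions is translation invariant: if f satisfies lim_{r→∞} (1/μ([-r,r])) ∫_{[-r,r]} (∫_t^{t+1} ‖f(s)‖^p ds)^{1/p} dμ(t) = 0, then so does f(· + τ) for every τ ∈ ℝ. -/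
open MeasureTheory Set Filter

/-- Hypothesis (M): for every `τ ∈ ℝ` there exist `β > 0` and a bounded interval `I`
such that `μ(A + τ) ≤ β μ(A)` for every Borel set `A` disjoint from `I`. -/
def HypM (μ : MeasureTheory.Measure ℝ) : Prop :=
  ∀ τ : ℝ, ∃ β : ℝ, 0 < β ∧ ∃ I : Set ℝ, Bornology.IsBounded I ∧
    ∀ A : Set ℝ, MeasurableSet A → A ∩ I = ∅ →
      μ ((fun a => a + τ) '' A) ≤ ENNReal.ofReal β * μ A

/-- `f` is `μ`-`S^p`-ergodic:
`(1/μ([-r,r])) ∫_{[-r,r]} (∫_t^{t+1} ‖f(s)‖^p ds)^{1/p} dμ(t) → 0` as `r → ∞`. -/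
def SpErgodic {X : Type*} [NormedAddCommGroup X] (μ : MeasureTheory.Measure ℝ)
    (p : ℝ) (f : ℝ → X) : Prop :=
  Filter.Tendsto (fun r : ℝ => (μ (Set.Icc (-r) r)).toReal⁻¹ *
      ∫ t in Set.Icc (-r) r, (∫ s in Set.Ioc t (t + 1), ‖f s‖ ^ p) ^ (1 / p) ∂μ)
    Filter.atTop (nhds 0)

/-- `f` is `μ`-ergodic (in the classical sense):
`(1/μ([-r,r])) ∫_{[-r,r]} ‖f(t)‖ dμ(t) → 0` as `r → ∞`. -/
def ClassicalErgodic {X : Type*} [NormedAddCommGroup X] (μ : MeasureTheory.Measure ℝ)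
    (f : ℝ → X) : Prop :=
  Filter.Tendsto (fun r : ℝ => (μ (Set.Icc (-r) r)).toReal⁻¹ *
      ∫ t in Set.Icc (-r) r, ‖f t‖ ∂μ) Filter.atTop (nhds 0)

open scoped ENNReal
open Topology

/-- under hypothesis (M), the space of `μ`-`S^p`-ergodic functions is
translation invariant. -/
theorem spErgodic_translation_invariant {X : Type*} [NormedAddCommGroup X]
    (p : ℝ) (hp : 1 ≤ p) (μ : Measure ℝ) (hμ1 : μ Set.univ = ⊤)
    (hμ2 : ∀ a b : ℝ, a ≤ b → μ (Icc a b) < ⊤) (hμM : HypM μ)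
    (f : ℝ → X) (hmeas : AEStronglyMeasurable f (volume : Measure ℝ))
    (C : ℝ) (hC : ∀ t : ℝ, (∫ s in Ioc t (t + 1), ‖f s‖ ^ p) ^ (1 / p) ≤ C)
    (herg : SpErgodic μ p f) :
    ∀ τ : ℝ, SpErgodic μ p (fun t => f (t + τ)) := by
  intro τ
  -- basic facts about μ on Icc
  have hμIccfin : ∀ r : ℝ, ∀ s : ℝ, μ (Icc r s) ≠ ⊤ := by
    intro r s
    rcases le_total r s with h | h
    · exact (hμ2 r s h).ne
    · rcases eq_or_lt_of_le h with h' | h'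
      · exact h' ▸ (hμ2 s s le_rfl).ne
      · rw [Icc_eq_empty (not_le.mpr h'), measure_empty]; exact ENNReal.zero_ne_top
  -- the function g
  set g : ℝ → ℝ := fun t => (∫ s in Ioc t (t + 1), ‖f s‖ ^ p) ^ (1 / p) with hg_def
  have hg0 : ∀ t, 0 ≤ g t := fun t =>
    Real.rpow_nonneg (integral_nonneg fun s => Real.rpow_nonneg (norm_nonneg _) _) _
  have hgC : ∀ t, g t ≤ C := hC
  have hC0 : 0 ≤ C := le_trans (hg0 0) (hgC 0)
  -- measurability of g
  have hnorm : AEMeasurable (fun s => ‖f s‖ ^ p) (volume : Measure ℝ) :=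
    hmeas.norm.aemeasurable.pow_const p
  have hfae : AEMeasurable (fun s => ENNReal.ofReal (‖f s‖ ^ p)) (volume : Measure ℝ) :=
    ENNReal.measurable_ofReal.comp_aemeasurable hnorm
  set φ : ℝ → ℝ≥0∞ := hfae.mk _ with hφ_def
  have hφm : Measurable φ := hfae.measurable_mk
  have hφe : (fun s => ENNReal.ofReal (‖f s‖ ^ p)) =ᵐ[volume] φ := hfae.ae_eq_mk
  have hGm : Measurable (fun t => ∫⁻ s in Ioc t (t + 1), φ s) := by
    have heq : (fun t => ∫⁻ s in Ioc t (t + 1), φ s)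
        = fun t => ∫⁻ s, (Ioc t (t + 1)).indicator φ s := by
      funext t; rw [lintegral_indicator measurableSet_Ioc]
    rw [heq]
    have : Measurable (fun q : ℝ × ℝ => (Ioc q.1 (q.1 + 1)).indicator φ q.2) := by
      have h1 : (fun q : ℝ × ℝ => (Ioc q.1 (q.1 + 1)).indicator φ q.2)
          = Set.indicator {q : ℝ × ℝ | q.1 < q.2 ∧ q.2 ≤ q.1 + 1} (fun q => φ q.2) := by
        funext q
        simp only [Set.indicator_apply, Set.mem_Ioc, Set.mem_setOf_eq]
      rw [h1]
      exact (hφm.comp measurable_snd).indicator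
        ((measurableSet_lt measurable_fst measurable_snd).inter
          (measurableSet_le measurable_snd (measurable_fst.add_const 1)))
    exact this.lintegral_prod_right'
  have hgeq : ∀ t, g t = ((∫⁻ s in Ioc t (t + 1), φ s).toReal) ^ (1 / p) := by
    intro t
    have h1 : ∫ s in Ioc t (t + 1), ‖f s‖ ^ p
        = (∫⁻ s in Ioc t (t + 1), ENNReal.ofReal (‖f s‖ ^ p)).toReal :=
      integral_eq_lintegral_of_nonneg_ae
        (Filter.Eventually.of_forall fun s => Real.rpow_nonneg (norm_nonneg _) _)
        (hnorm.aestronglyMeasurable.restrict)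
    have h2 : ∫⁻ s in Ioc t (t + 1), ENNReal.ofReal (‖f s‖ ^ p)
        = ∫⁻ s in Ioc t (t + 1), φ s :=
      lintegral_congr_ae (ae_restrict_of_ae hφe)
    simp only [hg_def]
    rw [h1, h2]
  have hgm : Measurable g := by
    have : g = fun t => ((∫⁻ s in Ioc t (t + 1), φ s).toReal) ^ (1 / p) := funext hgeq
    rw [this]
    exact (ENNReal.measurable_toReal.comp hGm).pow_const _
  -- shift identity
  have hshift : ∀ t : ℝ, (∫ s in Ioc t (t + 1), ‖f (s + τ)‖ ^ p) ^ (1 / p) = g (t + τ) := by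
    intro t
    have h1 : (t : ℝ) ≤ t + 1 := by linarith
    have h2 : (t + τ : ℝ) ≤ t + 1 + τ := by linarith
    have h3 := intervalIntegral.integral_comp_add_right (a := t) (b := t + 1)
      (fun s => ‖f s‖ ^ p) τ
    rw [hg_def]
    simp only
    congr 1
    rw [← intervalIntegral.integral_of_le h1, h3, intervalIntegral.integral_of_le h2,
      show t + 1 + τ = t + τ + 1 by ring]
  -- ennreal versions
  set gE : ℝ → ℝ≥0∞ := fun t => ENNReal.ofReal (g t) with hgE_def
  have hgEm : Measurable gE := ENNReal.measurable_ofReal.comp hgm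
  have hgEC : ∀ t, gE t ≤ ENNReal.ofReal C := fun t => ENNReal.ofReal_le_ofReal (hgC t)
  set L : ℝ → ℝ≥0∞ := fun ρ => ∫⁻ t in Icc (-ρ) ρ, gE t ∂μ with hL_def
  have hLfin : ∀ ρ : ℝ, L ρ ≠ ⊤ := by
    intro ρ
    have : L ρ ≤ ENNReal.ofReal C * μ (Icc (-ρ) ρ) := by
      calc L ρ ≤ ∫⁻ _ in Icc (-ρ) ρ, ENNReal.ofReal C ∂μ := lintegral_mono fun t => hgEC t
        _ = ENNReal.ofReal C * μ (Icc (-ρ) ρ) := setLIntegral_const _ _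
    exact ne_top_of_le_ne_top (ENNReal.mul_ne_top ENNReal.ofReal_ne_top (hμIccfin _ _)) this
  have hInt : ∀ ρ : ℝ, ∫ t in Icc (-ρ) ρ, g t ∂μ = (L ρ).toReal := by
    intro ρ
    exact integral_eq_lintegral_of_nonneg_ae
      (Filter.Eventually.of_forall fun t => hg0 t) hgm.aestronglyMeasurable.restrict
  set Lτ : ℝ → ℝ≥0∞ := fun r => ∫⁻ t in Icc (-r) r, gE (t + τ) ∂μ with hLτ_def
  have hIntτ : ∀ r : ℝ, ∫ t in Icc (-r) r, g (t + τ) ∂μ = (Lτ r).toReal := by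
    intro r
    exact integral_eq_lintegral_of_nonneg_ae
      (Filter.Eventually.of_forall fun t => hg0 _)
      ((hgm.comp (measurable_add_const τ)).aestronglyMeasurable.restrict)
  have hLτfin : ∀ r : ℝ, Lτ r ≠ ⊤ := by
    intro r
    have : Lτ r ≤ ENNReal.ofReal C * μ (Icc (-r) r) := by
      calc Lτ r ≤ ∫⁻ _ in Icc (-r) r, ENNReal.ofReal C ∂μ := lintegral_mono fun t => hgEC _
        _ = ENNReal.ofReal C * μ (Icc (-r) r) := setLIntegral_const _ _
    exact ne_top_of_le_ne_top (ENNReal.mul_ne_top ENNReal.ofReal_ne_top (hμIccfin _ _)) this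
  -- constants from hypothesis (M)
  have hboundIcc : ∀ I : Set ℝ, Bornology.IsBounded I → ∃ M : ℝ, 0 ≤ M ∧ I ⊆ Icc (-M) M := by
    intro I hI
    obtain ⟨R, hR⟩ := hI.subset_closedBall 0
    refine ⟨max R 0, le_max_right _ _, fun x hx => ?_⟩
    have := hR hx
    rw [Real.closedBall_eq_Icc] at this
    simp only [zero_sub, zero_add, mem_Icc] at this
    constructor
    · have : -R ≤ x := this.1
      have h2 : -(max R 0) ≤ -R := neg_le_neg (le_max_left _ _)
      linarith
    · exact le_trans this.2 (le_max_left _ _)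
  obtain ⟨β₁, hβ₁, I₁, hI₁b, hP₁⟩ := hμM (-τ)
  obtain ⟨M₁, hM₁0, hI₁⟩ := hboundIcc I₁ hI₁b
  obtain ⟨β₂, hβ₂, I₂, hI₂b, hP₂⟩ := hμM |τ|
  obtain ⟨M₂, hM₂0, hI₂⟩ := hboundIcc I₂ hI₂b
  obtain ⟨β₃, hβ₃, I₃, hI₃b, hP₃⟩ := hμM (-|τ|)
  obtain ⟨M₃, hM₃0, hI₃⟩ := hboundIcc I₃ hI₃b
  have habs : -|τ| ≤ τ ∧ τ ≤ |τ| := ⟨neg_abs_le τ, le_abs_self τ⟩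
  have habs0 : 0 ≤ |τ| := abs_nonneg τ
  set r₀ : ℝ := M₁ + M₂ + M₃ + |τ| + |τ| + 1 with hr₀_def
  -- the constant cE
  set cE : ℝ≥0∞ := ENNReal.ofReal C * (Measure.map (fun a => a + τ) μ) (Icc (-M₁) M₁)
    with hcE_def
  have hmapIcc : (Measure.map (fun a => a + τ) μ) (Icc (-M₁) M₁)
      = μ (Icc (-M₁ - τ) (M₁ - τ)) := by
    rw [Measure.map_apply (measurable_add_const τ) measurableSet_Icc,
      preimage_add_const_Icc]
  have hcEfin : cE ≠ ⊤ := by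
    rw [hcE_def, hmapIcc]
    exact ENNReal.mul_ne_top ENNReal.ofReal_ne_top (hμIccfin _ _)
  -- key inequality
  have key : ∀ r : ℝ, r ≥ r₀ → Lτ r ≤ cE + ENNReal.ofReal β₁ * L (r + |τ|) := by
    intro r hr
    have hrpos : 0 < r := by
      rw [hr₀_def] at hr; linarith
    set ν : Measure ℝ := Measure.map (fun a => a + τ) μ with hν_def
    have hpre : (fun a : ℝ => a + τ) ⁻¹' Icc (τ - r) (τ + r) = Icc (-r) r := by
      rw [preimage_add_const_Icc]
      congr 1 <;> ring
    have h1 : Lτ r = ∫⁻ x in Icc (τ - r) (τ + r), gE x ∂ν := by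
      rw [hν_def, setLIntegral_map measurableSet_Icc hgEm (measurable_add_const τ), hpre]
    set B : Set ℝ := Icc (τ - r) (τ + r) \ Icc (-M₁) M₁ with hB_def
    have hBm : MeasurableSet B := measurableSet_Icc.diff measurableSet_Icc
    have hsplit : ∫⁻ x in Icc (τ - r) (τ + r), gE x ∂ν
        ≤ ∫⁻ x in Icc (-M₁) M₁, gE x ∂ν + ∫⁻ x in B, gE x ∂ν := by
      refine le_trans (lintegral_mono_set ?_) (lintegral_union_le _ _ _)
      intro x hx
      by_cases h : x ∈ Icc (-M₁) M₁
      · exact Or.inl h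
      · exact Or.inr ⟨hx, h⟩
    have hb1 : ∫⁻ x in Icc (-M₁) M₁, gE x ∂ν ≤ cE := by
      calc ∫⁻ x in Icc (-M₁) M₁, gE x ∂ν
          ≤ ∫⁻ _ in Icc (-M₁) M₁, ENNReal.ofReal C ∂ν := lintegral_mono fun x => hgEC _
        _ = cE := setLIntegral_const _ _
    have hBI : ∀ s : Set ℝ, (s ∩ B) ∩ I₁ = ∅ := by
      intro s
      rw [eq_empty_iff_forall_notMem]
      rintro x ⟨⟨_, hxB⟩, hxI⟩
      exact hxB.2 (hI₁ hxI)
    have hle : ν.restrict B ≤ (ENNReal.ofReal β₁) • (μ.restrict B) := by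
      refine Measure.le_iff.mpr fun s hs => ?_
      rw [Measure.restrict_apply hs, Measure.smul_apply, Measure.restrict_apply hs,
        smul_eq_mul, hν_def, Measure.map_apply (measurable_add_const τ) (hs.inter hBm)]
      have himg : (fun a : ℝ => a + τ) ⁻¹' (s ∩ B) = (fun a : ℝ => a + (-τ)) '' (s ∩ B) := by
        rw [Set.image_add_right, neg_neg]
      rw [himg]
      exact hP₁ (s ∩ B) (hs.inter hBm) (hBI s)
    have hb2 : ∫⁻ x in B, gE x ∂ν ≤ ENNReal.ofReal β₁ * ∫⁻ x in B, gE x ∂μ := by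
      calc ∫⁻ x in B, gE x ∂ν ≤ ∫⁻ x, gE x ∂((ENNReal.ofReal β₁) • μ.restrict B) :=
            lintegral_mono' hle le_rfl
        _ = ENNReal.ofReal β₁ * ∫⁻ x in B, gE x ∂μ := lintegral_smul_measure _ _
    have hb3 : ∫⁻ x in B, gE x ∂μ ≤ L (r + |τ|) := by
      refine lintegral_mono_set ?_
      intro x hx
      have h1 := hx.1.1
      have h2 := hx.1.2
      simp only [mem_Icc] at h1 h2 ⊢
      constructor <;> [skip; skip]
      · have := habs.1; linarith [hx.1.1]
      · have := habs.2; linarith [hx.1.2]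
    calc Lτ r = ∫⁻ x in Icc (τ - r) (τ + r), gE x ∂ν := h1
      _ ≤ ∫⁻ x in Icc (-M₁) M₁, gE x ∂ν + ∫⁻ x in B, gE x ∂ν := hsplit
      _ ≤ cE + ENNReal.ofReal β₁ * L (r + |τ|) :=
          add_le_add hb1 (le_trans hb2 (mul_le_mul_right hb3 _))
  -- ratio inequality
  set KE : ℝ≥0∞ := 1 + ENNReal.ofReal β₂ + ENNReal.ofReal β₃ with hKE_def
  have hratio : ∀ r : ℝ, r ≥ r₀ → μ (Icc (-(r + |τ|)) (r + |τ|)) ≤ KE * μ (Icc (-r) r) := by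
    intro r hr
    have hr' : M₁ + M₂ + M₃ + |τ| + |τ| + 1 ≤ r := hr
    have hsub : Icc (-(r + |τ|)) (r + |τ|)
        ⊆ (Icc (-r) r ∪ Icc r (r + |τ|)) ∪ Icc (-(r + |τ|)) (-r) := by
      intro x hx
      simp only [mem_Icc] at hx
      by_cases h1 : x ≤ r
      · by_cases h2 : -r ≤ x
        · exact Or.inl (Or.inl (mem_Icc.mpr ⟨h2, h1⟩))
        · exact Or.inr (mem_Icc.mpr ⟨hx.1, by linarith [not_le.mp h2]⟩)
      · exact Or.inl (Or.inr (mem_Icc.mpr ⟨by linarith [not_le.mp h1], hx.2⟩))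
    have hp2 : μ (Icc r (r + |τ|)) ≤ ENNReal.ofReal β₂ * μ (Icc (-r) r) := by
      have himg : Icc r (r + |τ|) = (fun a : ℝ => a + |τ|) '' Icc (r - |τ|) r := by
        rw [Set.image_add_const_Icc]
        congr 1
        ring
      have hdisj : Icc (r - |τ|) r ∩ I₂ = ∅ := by
        rw [eq_empty_iff_forall_notMem]
        rintro x ⟨hx1, hx2⟩
        have := hI₂ hx2
        simp only [mem_Icc] at hx1 this
        linarith [hx1.1, this.2]
      calc μ (Icc r (r + |τ|)) = μ ((fun a : ℝ => a + |τ|) '' Icc (r - |τ|) r) := by rw [himg]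
        _ ≤ ENNReal.ofReal β₂ * μ (Icc (r - |τ|) r) := hP₂ _ measurableSet_Icc hdisj
        _ ≤ ENNReal.ofReal β₂ * μ (Icc (-r) r) :=
            mul_le_mul_right (measure_mono (Icc_subset_Icc (by linarith) le_rfl)) _
    have hp3 : μ (Icc (-(r + |τ|)) (-r)) ≤ ENNReal.ofReal β₃ * μ (Icc (-r) r) := by
      have himg : Icc (-(r + |τ|)) (-r) = (fun a : ℝ => a + (-|τ|)) '' Icc (-r) (-r + |τ|) := by
        rw [Set.image_add_const_Icc]
        congr 1 <;> ring
      have hdisj : Icc (-r) (-r + |τ|) ∩ I₃ = ∅ := by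
        rw [eq_empty_iff_forall_notMem]
        rintro x ⟨hx1, hx2⟩
        have := hI₃ hx2
        simp only [mem_Icc] at hx1 this
        linarith [hx1.2, this.1]
      calc μ (Icc (-(r + |τ|)) (-r)) = μ ((fun a : ℝ => a + (-|τ|)) '' Icc (-r) (-r + |τ|)) := by
            rw [himg]
        _ ≤ ENNReal.ofReal β₃ * μ (Icc (-r) (-r + |τ|)) := hP₃ _ measurableSet_Icc hdisj
        _ ≤ ENNReal.ofReal β₃ * μ (Icc (-r) r) :=
            mul_le_mul_right (measure_mono (Icc_subset_Icc le_rfl (by linarith))) _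
    calc μ (Icc (-(r + |τ|)) (r + |τ|))
        ≤ μ ((Icc (-r) r ∪ Icc r (r + |τ|)) ∪ Icc (-(r + |τ|)) (-r)) := measure_mono hsub
      _ ≤ μ (Icc (-r) r) + μ (Icc r (r + |τ|)) + μ (Icc (-(r + |τ|)) (-r)) :=
          le_trans (measure_union_le _ _) (add_le_add_left (measure_union_le _ _) _)
      _ ≤ μ (Icc (-r) r) + ENNReal.ofReal β₂ * μ (Icc (-r) r)
          + ENNReal.ofReal β₃ * μ (Icc (-r) r) := add_le_add (add_le_add le_rfl hp2) hp3
      _ = KE * μ (Icc (-r) r) := by rw [hKE_def, add_mul, add_mul, one_mul]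
  -- μ(Icc(-r)r).toReal → atTop
  have hatop : Tendsto (fun r : ℝ => (μ (Icc (-r) r)).toReal) atTop atTop := by
    rw [tendsto_atTop]
    intro b
    have hU : (⋃ n : ℕ, Icc (-(n : ℝ)) n) = univ := by
      rw [eq_univ_iff_forall]
      intro x
      simp only [mem_iUnion, mem_Icc]
      refine ⟨⌈|x|⌉₊, ?_, ?_⟩
      · have h1 := Nat.le_ceil |x|
        have h2 := neg_abs_le x
        linarith
      · have h1 := Nat.le_ceil |x|
        have h2 := le_abs_self x
        linarith
    have hdir : Directed (fun x1 x2 : Set ℝ => x1 ⊆ x2) (fun n : ℕ => Icc (-(n : ℝ)) n) := by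
      intro m n
      refine ⟨max m n, Icc_subset_Icc ?_ ?_, Icc_subset_Icc ?_ ?_⟩ <;>
        simp [neg_le_neg, Nat.cast_le, le_max_left, le_max_right]
    have hsup : (⨆ n : ℕ, μ (Icc (-(n : ℝ)) n)) = ⊤ := by
      rw [← hdir.measure_iUnion, hU, hμ1]
    obtain ⟨n, hn⟩ : ∃ n : ℕ, ENNReal.ofReal b < μ (Icc (-(n : ℝ)) n) := by
      by_contra h
      push_neg at h
      have h2 : (⨆ n : ℕ, μ (Icc (-(n : ℝ)) n)) ≤ ENNReal.ofReal b := iSup_le h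
      rw [hsup] at h2
      exact absurd (lt_of_le_of_lt h2 ENNReal.ofReal_lt_top) (lt_irrefl _)
    filter_upwards [eventually_ge_atTop (n : ℝ)] with r hr
    have hmono : μ (Icc (-(n : ℝ)) n) ≤ μ (Icc (-r) r) :=
      measure_mono (Icc_subset_Icc (by linarith) hr)
    exact (ENNReal.ofReal_le_iff_le_toReal (hμIccfin _ _)).mp (le_trans hn.le hmono)
  have hinv : Tendsto (fun r : ℝ => (μ (Icc (-r) r)).toReal⁻¹) atTop (𝓝 0) :=
    tendsto_inv_atTop_zero.comp hatop
  -- unfold herg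
  rw [SpErgodic] at herg
  have herg' : Tendsto (fun r : ℝ => (μ (Icc (-r) r)).toReal⁻¹
      * ∫ t in Icc (-r) r, g t ∂μ) atTop (𝓝 0) := herg
  set Gfun : ℝ → ℝ := fun ρ => (μ (Icc (-ρ) ρ)).toReal⁻¹ * ∫ t in Icc (-ρ) ρ, g t ∂μ
    with hGfun_def
  have hGτ : Tendsto (fun r : ℝ => Gfun (r + |τ|)) atTop (𝓝 0) :=
    herg'.comp (tendsto_atTop_add_const_right atTop |τ| tendsto_id)
  have hGnonneg : ∀ ρ : ℝ, 0 ≤ Gfun ρ := by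
    intro ρ
    exact mul_nonneg (inv_nonneg.mpr ENNReal.toReal_nonneg)
      (integral_nonneg fun t => hg0 t)
  -- real constants
  set c₁ : ℝ := cE.toReal with hc₁_def
  set K : ℝ := 1 + β₂ + β₃ with hK_def
  have hKE_toReal : KE.toReal = K := by
    rw [hKE_def, hK_def, ENNReal.toReal_add (by finiteness) (by finiteness),
      ENNReal.toReal_add (by finiteness) (by finiteness), ENNReal.toReal_one,
      ENNReal.toReal_ofReal hβ₂.le, ENNReal.toReal_ofReal hβ₃.le]
  have hKpos : 0 < K := by rw [hK_def]; linarith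
  -- the bound function
  set bnd : ℝ → ℝ := fun r => c₁ * (μ (Icc (-r) r)).toReal⁻¹ + (β₁ * K) * Gfun (r + |τ|)
    with hbnd_def
  have hbnd0 : Tendsto bnd atTop (𝓝 0) := by
    have h1 : Tendsto (fun r : ℝ => c₁ * (μ (Icc (-r) r)).toReal⁻¹) atTop (𝓝 (c₁ * 0)) :=
      hinv.const_mul c₁
    have h2 : Tendsto (fun r : ℝ => (β₁ * K) * Gfun (r + |τ|)) atTop (𝓝 ((β₁ * K) * 0)) :=
      hGτ.const_mul (β₁ * K)
    have := h1.add h2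
    simpa using this
  -- goal setup
  rw [SpErgodic]
  have hgoal_eq : (fun r : ℝ => (μ (Icc (-r) r)).toReal⁻¹
        * ∫ t in Icc (-r) r, (∫ s in Ioc t (t + 1), ‖f (s + τ)‖ ^ p) ^ (1 / p) ∂μ)
      = fun r : ℝ => (μ (Icc (-r) r)).toReal⁻¹ * ∫ t in Icc (-r) r, g (t + τ) ∂μ := by
    funext r
    congr 1
    exact integral_congr_ae (Filter.Eventually.of_forall fun t => hshift t)
  show Tendsto (fun r : ℝ => (μ (Icc (-r) r)).toReal⁻¹
      * ∫ t in Icc (-r) r, (∫ s in Ioc t (t + 1), ‖f (s + τ)‖ ^ p) ^ (1 / p) ∂μ)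
    atTop (𝓝 0)
  rw [hgoal_eq]
  -- squeeze
  refine tendsto_of_tendsto_of_tendsto_of_le_of_le' tendsto_const_nhds hbnd0 ?_ ?_
  · exact Filter.Eventually.of_forall fun r =>
      mul_nonneg (inv_nonneg.mpr ENNReal.toReal_nonneg) (integral_nonneg fun t => hg0 _)
  · filter_upwards [eventually_ge_atTop r₀, hatop.eventually_ge_atTop 1] with r hr hm1
    set m : ℝ := (μ (Icc (-r) r)).toReal with hm_def
    set m' : ℝ := (μ (Icc (-(r + |τ|)) (r + |τ|))).toReal with hm'_def
    have hmpos : 0 < m := lt_of_lt_of_le one_pos hm1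
    have hmm' : m ≤ m' := by
      rw [hm_def, hm'_def]
      exact ENNReal.toReal_mono (hμIccfin _ _)
        (measure_mono (Icc_subset_Icc (by linarith) (by linarith)))
    have hm'pos : 0 < m' := lt_of_lt_of_le hmpos hmm'
    have hm'K : m' ≤ K * m := by
      have h1 := hratio r hr
      have h2 : (KE * μ (Icc (-r) r)).toReal = K * m := by
        rw [ENNReal.toReal_mul, hKE_toReal, hm_def]
      calc m' ≤ (KE * μ (Icc (-r) r)).toReal :=
            ENNReal.toReal_mono (ENNReal.mul_ne_top (by finiteness) (hμIccfin _ _)) h1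
        _ = K * m := h2
    -- chain of inequalities
    have hLr' : (L (r + |τ|)).toReal = m' * Gfun (r + |τ|) := by
      rw [hGfun_def]
      simp only
      rw [hInt (r + |τ|), ← mul_assoc, mul_inv_cancel₀ (ne_of_gt hm'pos), one_mul]
    have hchain : (Lτ r).toReal ≤ c₁ + β₁ * (K * m * Gfun (r + |τ|)) := by
      have h1 : (Lτ r).toReal ≤ (cE + ENNReal.ofReal β₁ * L (r + |τ|)).toReal :=
        ENNReal.toReal_mono
          (ENNReal.add_ne_top.mpr ⟨hcEfin,
            ENNReal.mul_ne_top ENNReal.ofReal_ne_top (hLfin _)⟩) (key r hr)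
      have h2 : (cE + ENNReal.ofReal β₁ * L (r + |τ|)).toReal
          = c₁ + β₁ * (L (r + |τ|)).toReal := by
        rw [ENNReal.toReal_add hcEfin
            (ENNReal.mul_ne_top ENNReal.ofReal_ne_top (hLfin _)), hc₁_def]
        congr 1
        rw [ENNReal.toReal_mul, ENNReal.toReal_ofReal hβ₁.le]
      rw [h2] at h1
      refine le_trans h1 ?_
      have h3 : (L (r + |τ|)).toReal ≤ K * m * Gfun (r + |τ|) := by
        rw [hLr']
        exact mul_le_mul_of_nonneg_right hm'K (hGnonneg _)
      nlinarith [hGnonneg (r + |τ|), h3]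
    calc m⁻¹ * ∫ t in Icc (-r) r, g (t + τ) ∂μ
        = m⁻¹ * (Lτ r).toReal := by rw [hIntτ r]
      _ ≤ m⁻¹ * (c₁ + β₁ * (K * m * Gfun (r + |τ|))) :=
          mul_le_mul_of_nonneg_left hchain (inv_nonneg.mpr hmpos.le)
      _ = c₁ * m⁻¹ + (β₁ * K) * Gfun (r + |τ|) := by
          field_simp
      _ ≤ bnd r := le_rfl
end

section
/- Let μ be a positive Borel measure on ℝ with μ(ℝ) = ∞, finite on compact intervals, satisfying hypothesis (M). Every μ-ergodic bounded continuous function is μ-S^p-ergodic: if f ∈ BC(ℝ, X) satisfies lim_{r→∞} (1/μ([-r,r])) ∫_{[-r,r]} ‖f(t)‖ dμ(t) = 0, then lim_{r→∞} (1/μ([-r,r])) ∫_{[-r,r]} (∫_t^{t+1} ‖f(s)‖^p ds)^{1/p} dμ(t) = 0 for every 1 ≤ p < ∞. -/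
open MeasureTheory Set Filter

lemma my_fmc (μ : Measure ℝ) (hμ2 : ∀ a b : ℝ, a ≤ b → μ (Icc a b) < ⊤) :
    IsFiniteMeasureOnCompacts μ := by
  constructor
  intro K hK
  obtain ⟨a, ha⟩ := hK.isBounded.subset_closedBall 0
  have h1 : K ⊆ Icc (-|a|) |a| := by
    refine ha.trans ?_
    rw [Real.closedBall_eq_Icc]
    exact Icc_subset_Icc (by linarith [le_abs_self a, neg_abs_le a]) (by simpa using le_abs_self a)
  exact lt_of_le_of_lt (measure_mono h1) (hμ2 _ _ (neg_le_self (abs_nonneg a)))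

lemma my_M_mono (μ : Measure ℝ) {r r' : ℝ} (h : r ≤ r') :
    μ (Icc (-r) r) ≤ μ (Icc (-r') r') :=
  measure_mono (Icc_subset_Icc (by linarith) h)

lemma my_M_tendsto (μ : Measure ℝ) (hμ1 : μ Set.univ = ⊤)
    (hμ2 : ∀ a b : ℝ, a ≤ b → μ (Icc a b) < ⊤) :
    Tendsto (fun r : ℝ => (μ (Icc (-r) r)).toReal) atTop atTop := by
  rw [tendsto_atTop]
  intro b
  have hU : (⋃ n : ℕ, Icc (-(n:ℝ)) n) = univ := by
    ext x
    simp only [mem_iUnion, mem_Icc, mem_univ, iff_true]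
    refine ⟨⌈|x|⌉₊, ?_, ?_⟩
    · have h := Nat.le_ceil |x|
      linarith [neg_abs_le x]
    · have h := Nat.le_ceil |x|
      linarith [le_abs_self x]
  have hmono : Monotone (fun n : ℕ => Icc (-(n:ℝ)) n) := fun m n hmn =>
    Icc_subset_Icc (by simp; exact_mod_cast hmn) (by exact_mod_cast hmn)
  have ht := tendsto_measure_iUnion_atTop (μ := μ) hmono
  rw [hU, hμ1] at ht
  have hev : ∀ᶠ n : ℕ in atTop, ENNReal.ofReal b < μ (Icc (-(n:ℝ)) n) :=
    ht (Ioi_mem_nhds ENNReal.ofReal_lt_top)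
  obtain ⟨n, hn⟩ := hev.exists
  filter_upwards [eventually_ge_atTop (n:ℝ)] with r hr
  have h1 : ENNReal.ofReal b < μ (Icc (-r) r) := lt_of_lt_of_le hn (my_M_mono μ hr)
  have h2 : b ≤ (ENNReal.ofReal b).toReal := by
    rcases le_or_gt 0 b with h | h
    · rw [ENNReal.toReal_ofReal h]
    · exact le_trans h.le ENNReal.toReal_nonneg
  exact h2.trans (ENNReal.toReal_mono (hμ2 _ _ (by linarith [(by positivity : (0:ℝ) ≤ (n:ℝ))])).ne h1.le)

lemma my_hypM_elim {μ : Measure ℝ} (hμM : HypM μ) (τ : ℝ) :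
    ∃ β : ℝ, 0 < β ∧ ∃ a : ℝ, 0 ≤ a ∧
      ∀ A : Set ℝ, MeasurableSet A → A ∩ Icc (-a) a = ∅ →
        μ ((fun x => x + τ) '' A) ≤ ENNReal.ofReal β * μ A := by
  obtain ⟨β, hβ, I, hI, h⟩ := hμM τ
  obtain ⟨c, hc⟩ := hI.subset_closedBall 0
  refine ⟨β, hβ, |c|, abs_nonneg c, fun A hA hAI => h A hA ?_⟩
  have hIsub : I ⊆ Icc (-|c|) |c| := by
    refine hc.trans ?_
    rw [Real.closedBall_eq_Icc]
    exact Icc_subset_Icc (by linarith [le_abs_self c, neg_abs_le c]) (by simpa using le_abs_self c)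
  exact eq_empty_of_subset_empty (hAI ▸ inter_subset_inter_right A hIsub)

lemma my_image_eq_preimage (a : ℝ) (s : Set ℝ) :
    (fun x => x + a) '' s = (fun x => x + (-a)) ⁻¹' s := by
  ext x; simp only [mem_image, mem_preimage]
  constructor
  · rintro ⟨y, hy, rfl⟩; simpa using hy
  · intro h; exact ⟨x + (-a), h, by ring⟩

lemma my_map_restrict_le {μ : Measure ℝ} (hμM : HypM μ) (τ : ℝ) :
    ∃ β : ℝ, 0 < β ∧ ∃ a : ℝ, 0 ≤ a ∧
      (μ.map (fun x => x + τ)).restrict (Icc (-a) a)ᶜ ≤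
        (ENNReal.ofReal β • μ).restrict (Icc (-a) a)ᶜ := by
  obtain ⟨β, hβ, a, ha, h⟩ := my_hypM_elim hμM (-τ)
  refine ⟨β, hβ, a, ha, ?_⟩
  rw [Measure.le_iff]
  intro s hs
  have hK : MeasurableSet ((Icc (-a) a)ᶜ) := measurableSet_Icc.compl
  rw [Measure.restrict_apply hs, Measure.restrict_apply hs]
  have hm : MeasurableSet (s ∩ (Icc (-a) a)ᶜ) := hs.inter hK
  rw [Measure.map_apply (measurable_add_const τ) hm]
  have himg : (fun x => x + τ) ⁻¹' (s ∩ (Icc (-a) a)ᶜ)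
      = (fun x => x + (-τ)) '' (s ∩ (Icc (-a) a)ᶜ) := by
    rw [my_image_eq_preimage]; simp
  rw [himg, Measure.smul_apply, smul_eq_mul]
  refine h _ hm ?_
  ext x
  simp only [mem_inter_iff, mem_compl_iff, mem_empty_iff_false, iff_false, not_and]
  tauto

lemma my_translate_bound (μ : Measure ℝ)
    (hμ2 : ∀ a b : ℝ, a ≤ b → μ (Icc a b) < ⊤) (hμM : HypM μ)
    {g : ℝ → ℝ} (hg : Continuous g) (hgnn : ∀ t, 0 ≤ g t) {C : ℝ} (hgC : ∀ t, g t ≤ C)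
    (τ : ℝ) :
    ∃ β : ℝ, 0 < β ∧ ∃ D : ℝ, 0 ≤ D ∧ ∀ r : ℝ,
      ∫ t in Icc (-r) r, g (t + τ) ∂μ
        ≤ β * ∫ t in Icc (-(r + |τ|)) (r + |τ|), g t ∂μ + D := by
  haveI := my_fmc μ hμ2
  have hC0 : 0 ≤ C := le_trans (hgnn 0) (hgC 0)
  obtain ⟨β, hβ, a, ha, hle⟩ := my_map_restrict_le hμM τ
  set b := a + |τ| with hb
  have hb0 : (0:ℝ) ≤ b := by positivity
  set J := Icc (-b) b with hJ
  have hJfin : μ J < ⊤ := hμ2 _ _ (neg_le_self hb0)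
  refine ⟨β, hβ, C * (μ J).toReal, by positivity, fun r => ?_⟩
  have hgτ : Continuous fun t => g (t + τ) := hg.comp (continuous_add_right τ)
  have hint : IntegrableOn (fun t => g (t + τ)) (Icc (-r) r) μ := hgτ.integrableOn_Icc
  have hsplit := integral_inter_add_diff (μ := μ) (s := Icc (-r) r) (t := J)
    measurableSet_Icc hint
  -- term over the bounded exceptional set
  have h2 : ∫ t in Icc (-r) r ∩ J, g (t + τ) ∂μ ≤ C * (μ J).toReal := by
    have hfin : μ (Icc (-r) r ∩ J) < ⊤ :=
      lt_of_le_of_lt (measure_mono inter_subset_right) hJfin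
    have := norm_setIntegral_le_of_norm_le_const (μ := μ) (s := Icc (-r) r ∩ J)
      (f := fun t => g (t + τ)) (C := C) hfin
      (fun x _ => by rw [Real.norm_eq_abs, abs_of_nonneg (hgnn _)]; exact hgC _)
    refine le_trans (le_trans (le_abs_self _) this) ?_
    exact mul_le_mul_of_nonneg_left
      (ENNReal.toReal_mono hJfin.ne (measure_mono inter_subset_right)) hC0
  -- main term via hypothesis (M)
  set A := Icc (-r) r \ J with hA
  have hAm : MeasurableSet A := measurableSet_Icc.diff measurableSet_Icc
  set B := (fun x => x + (-τ)) ⁻¹' A with hB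
  have hBimg : (fun x => x + τ) '' A = B := my_image_eq_preimage τ A
  have hBm : MeasurableSet B := hAm.preimage (measurable_add_const (-τ))
  have hBK : B ⊆ (Icc (-a) a)ᶜ := by
    intro x hx
    simp only [hB, mem_preimage, hA, mem_diff, hJ, mem_Icc, not_and_or, not_le] at hx
    simp only [mem_compl_iff, mem_Icc, not_and_or, not_le]
    rcases hx.2 with h | h
    · left; cases abs_le.mp (le_refl |τ|) with
      | intro h1 h2 => linarith [neg_abs_le τ, le_abs_self τ]
    · right; linarith [neg_abs_le τ, le_abs_self τ]
  have hBsub : B ⊆ Icc (-(r + |τ|)) (r + |τ|) := by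
    intro x hx
    simp only [hB, mem_preimage, hA, mem_diff, mem_Icc] at hx
    obtain ⟨⟨h1, h2⟩, _⟩ := hx
    constructor <;> [linarith [neg_abs_le τ, le_abs_self τ]; linarith [neg_abs_le τ, le_abs_self τ]]
  have h1 : ∫ t in A, g (t + τ) ∂μ ≤ β * ∫ t in Icc (-(r + |τ|)) (r + |τ|), g t ∂μ := by
    have e_meas : Measurable fun x : ℝ => x + τ := measurable_add_const τ
    have hpre : (fun x : ℝ => x + τ) ⁻¹' B = A := by
      rw [← hBimg, Set.preimage_image_eq _ (add_left_injective τ)]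
    have step1 : ∫ t in A, g (t + τ) ∂μ = ∫ x in B, g x ∂(μ.map (fun x => x + τ)) := by
      rw [Measure.restrict_map e_meas hBm, hpre,
        integral_map e_meas.aemeasurable hg.aestronglyMeasurable]
    have hintB : Integrable g ((ENNReal.ofReal β • μ).restrict B) := by
      rw [Measure.restrict_smul]
      exact ((hg.integrableOn_Icc (a := -(r + |τ|)) (b := r + |τ|)).mono_set hBsub).smul_measure
        ENNReal.ofReal_ne_top
    have hmle : (μ.map (fun x => x + τ)).restrict B ≤ (ENNReal.ofReal β • μ).restrict B := by
      have e1 : ((μ.map (fun x => x + τ)).restrict (Icc (-a) a)ᶜ).restrict B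
          = (μ.map (fun x => x + τ)).restrict B := by
        rw [Measure.restrict_restrict hBm, inter_eq_self_of_subset_left hBK]
      have e2 : ((ENNReal.ofReal β • μ).restrict (Icc (-a) a)ᶜ).restrict B
          = (ENNReal.ofReal β • μ).restrict B := by
        rw [Measure.restrict_restrict hBm, inter_eq_self_of_subset_left hBK]
      rw [← e1, ← e2]
      exact Measure.restrict_mono (le_refl _) hle
    have step2 : ∫ x in B, g x ∂(μ.map (fun x => x + τ))
        ≤ ∫ x in B, g x ∂(ENNReal.ofReal β • μ) :=
      integral_mono_measure hmle (Eventually.of_forall hgnn) hintB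
    have step3 : ∫ x in B, g x ∂(ENNReal.ofReal β • μ) = β * ∫ x in B, g x ∂μ := by
      rw [Measure.restrict_smul, integral_smul_measure, ENNReal.toReal_ofReal hβ.le,
        smul_eq_mul]
    have step4 : ∫ x in B, g x ∂μ ≤ ∫ x in Icc (-(r + |τ|)) (r + |τ|), g x ∂μ :=
      setIntegral_mono_set (hg.integrableOn_Icc) (Eventually.of_forall fun x => hgnn x)
        (HasSubset.Subset.eventuallyLE hBsub)
    rw [step1]
    calc _ ≤ ∫ x in B, g x ∂(ENNReal.ofReal β • μ) := step2
      _ = β * ∫ x in B, g x ∂μ := step3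
      _ ≤ β * ∫ x in Icc (-(r + |τ|)) (r + |τ|), g x ∂μ :=
        mul_le_mul_of_nonneg_left step4 hβ.le
  linarith [hsplit]

lemma my_M_ratio (μ : Measure ℝ)
    (hμ2 : ∀ a b : ℝ, a ≤ b → μ (Icc a b) < ⊤) (hμM : HypM μ)
    (T : ℝ) (hT : 0 ≤ T) :
    ∃ K : ℝ, 0 < K ∧ ∀ᶠ r : ℝ in atTop,
      (μ (Icc (-(r + T)) (r + T))).toReal ≤ K * (μ (Icc (-r) r)).toReal := by
  obtain ⟨β₁, hβ₁, a₁, ha₁, h1⟩ := my_hypM_elim hμM T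
  obtain ⟨β₂, hβ₂, a₂, ha₂, h2⟩ := my_hypM_elim hμM (-T)
  refine ⟨β₂ + 1 + β₁, by positivity, ?_⟩
  filter_upwards [eventually_ge_atTop (max a₁ a₂ + T)] with r hr
  have hr1 : a₁ + T ≤ r := le_trans (by simp [le_max_left]) hr
  have hr2 : a₂ + T ≤ r := le_trans (by simp [le_max_right, add_le_add_iff_right]) hr
  have hr0 : 0 ≤ r := by linarith [le_max_left a₁ a₂]
  have hfin : μ (Icc (-r) r) ≠ ⊤ := (hμ2 _ _ (by linarith)).ne
  have hIoc : μ (Ioc r (r + T)) ≤ ENNReal.ofReal β₁ * μ (Icc (-r) r) := by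
    have himg : (fun x => x + T) '' Ioc (r - T) r = Ioc r (r + T) := by
      rw [image_add_const_Ioc]; congr 1; ring
    have hdisj : Ioc (r - T) r ∩ Icc (-a₁) a₁ = ∅ := by
      ext x
      simp only [mem_inter_iff, mem_Ioc, mem_Icc, mem_empty_iff_false, iff_false, not_and]
      intro h hle hc
      linarith [h.1, h.2]
    calc μ (Ioc r (r + T)) = μ ((fun x => x + T) '' Ioc (r - T) r) := by rw [himg]
      _ ≤ ENNReal.ofReal β₁ * μ (Ioc (r - T) r) := h1 _ measurableSet_Ioc hdisj
      _ ≤ ENNReal.ofReal β₁ * μ (Icc (-r) r) := by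
          gcongr
          exact (Ioc_subset_Icc_self).trans (Icc_subset_Icc (by linarith) le_rfl)
  have hIco : μ (Ico (-(r + T)) (-r)) ≤ ENNReal.ofReal β₂ * μ (Icc (-r) r) := by
    have himg : (fun x => x + (-T)) '' Ico (-r) (-r + T) = Ico (-(r + T)) (-r) := by
      rw [image_add_const_Ico]; congr 1 <;> ring
    have hdisj : Ico (-r) (-r + T) ∩ Icc (-a₂) a₂ = ∅ := by
      ext x
      simp only [mem_inter_iff, mem_Ico, mem_Icc, mem_empty_iff_false, iff_false, not_and]
      intro h hle hc
      linarith [h.1, h.2]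
    calc μ (Ico (-(r + T)) (-r)) = μ ((fun x => x + (-T)) '' Ico (-r) (-r + T)) := by rw [himg]
      _ ≤ ENNReal.ofReal β₂ * μ (Ico (-r) (-r + T)) := h2 _ measurableSet_Ico hdisj
      _ ≤ ENNReal.ofReal β₂ * μ (Icc (-r) r) := by
          gcongr
          exact (Ico_subset_Icc_self).trans (Icc_subset_Icc le_rfl (by linarith))
  have hcov : Icc (-(r + T)) (r + T) ⊆ (Ico (-(r + T)) (-r) ∪ Icc (-r) r) ∪ Ioc r (r + T) := by
    intro x hx
    simp only [mem_Icc] at hx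
    rcases lt_or_ge x (-r) with h | h
    · exact Or.inl (Or.inl ⟨hx.1, h⟩)
    · rcases le_or_gt x r with h' | h'
      · exact Or.inl (Or.inr ⟨h, h'⟩)
      · exact Or.inr ⟨h', hx.2⟩
  have key : μ (Icc (-(r + T)) (r + T))
      ≤ (ENNReal.ofReal β₂ + 1 + ENNReal.ofReal β₁) * μ (Icc (-r) r) := by
    calc μ (Icc (-(r + T)) (r + T))
        ≤ μ ((Ico (-(r + T)) (-r) ∪ Icc (-r) r) ∪ Ioc r (r + T)) := measure_mono hcov
      _ ≤ μ (Ico (-(r + T)) (-r) ∪ Icc (-r) r) + μ (Ioc r (r + T)) := measure_union_le _ _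
      _ ≤ (μ (Ico (-(r + T)) (-r)) + μ (Icc (-r) r)) + μ (Ioc r (r + T)) :=
          add_le_add_left (measure_union_le _ _) _
      _ ≤ (ENNReal.ofReal β₂ * μ (Icc (-r) r) + μ (Icc (-r) r))
          + ENNReal.ofReal β₁ * μ (Icc (-r) r) := add_le_add (add_le_add_left hIco _) hIoc
      _ = (ENNReal.ofReal β₂ + 1 + ENNReal.ofReal β₁) * μ (Icc (-r) r) := by ring
  have hRfin : (ENNReal.ofReal β₂ + 1 + ENNReal.ofReal β₁) * μ (Icc (-r) r) ≠ ⊤ :=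
    ENNReal.mul_ne_top (by simp [ENNReal.ofReal_ne_top]) hfin
  have := ENNReal.toReal_mono hRfin key
  rw [ENNReal.toReal_mul, ENNReal.toReal_add (by simp [ENNReal.ofReal_ne_top]) ENNReal.ofReal_ne_top,
    ENNReal.toReal_add ENNReal.ofReal_ne_top ENNReal.one_ne_top, ENNReal.toReal_ofReal hβ₂.le,
    ENNReal.toReal_ofReal hβ₁.le, ENNReal.toReal_one] at this
  exact this

lemma my_translate_ergodic (μ : Measure ℝ) (hμ1 : μ Set.univ = ⊤)
    (hμ2 : ∀ a b : ℝ, a ≤ b → μ (Icc a b) < ⊤) (hμM : HypM μ)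
    {g : ℝ → ℝ} (hg : Continuous g) (hgnn : ∀ t, 0 ≤ g t) {C : ℝ} (hgC : ∀ t, g t ≤ C)
    (herg : Tendsto (fun r : ℝ => (μ (Icc (-r) r)).toReal⁻¹ *
      ∫ t in Icc (-r) r, g t ∂μ) atTop (nhds 0)) (τ : ℝ) :
    Tendsto (fun r : ℝ => (μ (Icc (-r) r)).toReal⁻¹ *
      ∫ t in Icc (-r) r, g (t + τ) ∂μ) atTop (nhds 0) := by
  obtain ⟨β, hβ, D, hD, hbound⟩ := my_translate_bound μ hμ2 hμM hg hgnn hgC τ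
  obtain ⟨K, hK, hratio⟩ := my_M_ratio μ hμ2 hμM |τ| (abs_nonneg τ)
  have hM := my_M_tendsto μ hμ1 hμ2
  have hcomp : Tendsto (fun r : ℝ => (μ (Icc (-(r + |τ|)) (r + |τ|))).toReal⁻¹ *
      ∫ t in Icc (-(r + |τ|)) (r + |τ|), g t ∂μ) atTop (nhds 0) :=
    herg.comp (tendsto_atTop_add_const_right atTop |τ| tendsto_id)
  have hinv : Tendsto (fun r : ℝ => ((μ (Icc (-r) r)).toReal)⁻¹) atTop (nhds 0) :=
    hM.inv_tendsto_atTop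
  have hRHS : Tendsto (fun r : ℝ => β * K * ((μ (Icc (-(r + |τ|)) (r + |τ|))).toReal⁻¹ *
      ∫ t in Icc (-(r + |τ|)) (r + |τ|), g t ∂μ) + D * ((μ (Icc (-r) r)).toReal)⁻¹)
      atTop (nhds 0) := by
    have := (hcomp.const_mul (β * K)).add (hinv.const_mul D)
    simpa using this
  refine tendsto_of_tendsto_of_tendsto_of_le_of_le' tendsto_const_nhds hRHS ?_ ?_
  · filter_upwards with r
    have : 0 ≤ ∫ t in Icc (-r) r, g (t + τ) ∂μ := integral_nonneg fun t => hgnn _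
    positivity
  · filter_upwards [hratio, hM.eventually_gt_atTop 0, eventually_ge_atTop (0:ℝ)]
      with r hrat hMpos hr0
    have hMs_nn : 0 ≤ (μ (Icc (-(r + |τ|)) (r + |τ|))).toReal := ENNReal.toReal_nonneg
    have hIs_nn : 0 ≤ ∫ t in Icc (-(r + |τ|)) (r + |τ|), g t ∂μ :=
      integral_nonneg fun t => hgnn _
    set Mr := (μ (Icc (-r) r)).toReal with hMr
    set Ms := (μ (Icc (-(r + |τ|)) (r + |τ|))).toReal with hMs
    set Is := ∫ t in Icc (-(r + |τ|)) (r + |τ|), g t ∂μ with hIs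
    have step1 : Mr⁻¹ * ∫ t in Icc (-r) r, g (t + τ) ∂μ ≤ Mr⁻¹ * (β * Is + D) := by
      apply mul_le_mul_of_nonneg_left (hbound r) (by positivity)
    have hMs_pos : 0 < Ms :=
      lt_of_lt_of_le hMpos (ENNReal.toReal_mono
        (hμ2 _ _ (by linarith [abs_nonneg τ])).ne (my_M_mono μ (by linarith [abs_nonneg τ])))
    have step2 : Mr⁻¹ * Is ≤ K * (Ms⁻¹ * Is) := by
      have h1 : Mr⁻¹ * Is = (Ms * Mr⁻¹) * (Ms⁻¹ * Is) := by
        field_simp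
      rw [h1]
      have h2 : Ms * Mr⁻¹ ≤ K := by
        rw [mul_inv_le_iff₀ hMpos]
        exact hrat
      exact mul_le_mul_of_nonneg_right h2 (by positivity)
    calc Mr⁻¹ * ∫ t in Icc (-r) r, g (t + τ) ∂μ ≤ Mr⁻¹ * (β * Is + D) := step1
      _ = β * (Mr⁻¹ * Is) + D * Mr⁻¹ := by ring
      _ ≤ β * (K * (Ms⁻¹ * Is)) + D * Mr⁻¹ := by
          have := mul_le_mul_of_nonneg_left step2 hβ.le
          linarith
      _ = β * K * (Ms⁻¹ * Is) + D * Mr⁻¹ := by ring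

lemma my_Icc_fin (μ : Measure ℝ) (hμ2 : ∀ a b : ℝ, a ≤ b → μ (Icc a b) < ⊤) (r : ℝ) :
    μ (Icc (-r) r) < ⊤ := by
  rcases le_or_gt (-r) r with h | h
  · exact hμ2 _ _ h
  · rw [Icc_eq_empty (not_le.mpr h)]; simp

lemma my_restrict_fin (μ : Measure ℝ) (hμ2 : ∀ a b : ℝ, a ≤ b → μ (Icc a b) < ⊤) (r : ℝ) :
    IsFiniteMeasure (μ.restrict (Icc (-r) r)) := by
  constructor
  rw [Measure.restrict_apply_univ]
  exact my_Icc_fin μ hμ2 r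

lemma my_G_ergodic (μ : Measure ℝ) (hμ1 : μ Set.univ = ⊤)
    (hμ2 : ∀ a b : ℝ, a ≤ b → μ (Icc a b) < ⊤) (hμM : HypM μ)
    {g : ℝ → ℝ} (hg : Continuous g) (hgnn : ∀ t, 0 ≤ g t) {C : ℝ} (hgC : ∀ t, g t ≤ C)
    (herg : Tendsto (fun r : ℝ => (μ (Icc (-r) r)).toReal⁻¹ *
      ∫ t in Icc (-r) r, g t ∂μ) atTop (nhds 0)) :
    Tendsto (fun r : ℝ => (μ (Icc (-r) r)).toReal⁻¹ *
      ∫ t in Icc (-r) r, (∫ s in Ioc t (t+1), g s) ∂μ) atTop (nhds 0) := by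
  haveI := my_fmc μ hμ2
  have hC0 : 0 ≤ C := le_trans (hgnn 0) (hgC 0)
  haveI hIocFin : IsFiniteMeasure (volume.restrict (Ioc (0:ℝ) 1)) := by
    constructor
    rw [Measure.restrict_apply_univ]
    simp [Real.volume_Ioc]
  -- Step A : inner integral as integral over a fixed interval
  have hGA : ∀ t : ℝ, (∫ s in Ioc t (t+1), g s) = ∫ s in Ioc (0:ℝ) 1, g (t + s) := by
    intro t
    have h2 : (fun x : ℝ => x + t) ⁻¹' (Ioc t (t+1)) = Ioc 0 1 := by
      ext x
      simp only [mem_preimage, mem_Ioc]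
      constructor <;> intro h <;> exact ⟨by linarith [h.1], by linarith [h.2]⟩
    have hmap : (volume : Measure ℝ).restrict (Ioc t (t+1))
        = (volume.restrict (Ioc (0:ℝ) 1)).map (fun x => x + t) := by
      have h1 := Measure.restrict_map (μ := (volume : Measure ℝ))
        (measurable_add_const t) (measurableSet_Ioc (a := t) (b := t +1))
      rw [map_add_right_eq_self volume t] at h1
      rw [h1, h2]
    rw [hmap, integral_map (measurable_add_const t).aemeasurable hg.aestronglyMeasurable]
    exact integral_congr_ae (Eventually.of_forall fun s => by show g (s + t) = g (t + s); rw [add_comm])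
  -- Step B : Fubini
  have key : ∀ r : ℝ, (∫ t in Icc (-r) r, (∫ s in Ioc t (t+1), g s) ∂μ)
      = ∫ s in Ioc (0:ℝ) 1, (∫ t in Icc (-r) r, g (t + s) ∂μ) := by
    intro r
    haveI := my_restrict_fin μ hμ2 r
    have hcont2 : Continuous (fun p : ℝ × ℝ => g (p.1 + p.2)) := hg.comp continuous_add
    have hintp : Integrable (Function.uncurry fun t s => g (t + s))
        ((μ.restrict (Icc (-r) r)).prod (volume.restrict (Ioc (0:ℝ) 1))) := by
      refine Integrable.mono' (integrable_const C) hcont2.aestronglyMeasurable ?_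
      filter_upwards with p
      show ‖g (p.1 + p.2)‖ ≤ C
      rw [Real.norm_eq_abs, abs_of_nonneg (hgnn _)]
      exact hgC _
    calc ∫ t in Icc (-r) r, (∫ s in Ioc t (t+1), g s) ∂μ
        = ∫ t in Icc (-r) r, (∫ s in Ioc (0:ℝ) 1, g (t + s)) ∂μ :=
          integral_congr_ae (Eventually.of_forall fun t => hGA t)
      _ = ∫ s in Ioc (0:ℝ) 1, (∫ t in Icc (-r) r, g (t + s) ∂μ) := integral_integral_swap hintp
  have heq : ∀ r : ℝ, (μ (Icc (-r) r)).toReal⁻¹ *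
      ∫ t in Icc (-r) r, (∫ s in Ioc t (t+1), g s) ∂μ
      = ∫ s in Ioc (0:ℝ) 1, ((μ (Icc (-r) r)).toReal⁻¹ * ∫ t in Icc (-r) r, g (t + s) ∂μ) := by
    intro r
    rw [key r, MeasureTheory.integral_const_mul]
  have hlim : Tendsto (fun r : ℝ => ∫ s in Ioc (0:ℝ) 1,
      ((μ (Icc (-r) r)).toReal⁻¹ * ∫ t in Icc (-r) r, g (t + s) ∂μ)) atTop (nhds 0) := by
    have h0 : nhds (0:ℝ) = nhds (∫ _ in Ioc (0:ℝ) 1, (0:ℝ)) := by simp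
    rw [h0]
    refine tendsto_integral_filter_of_dominated_convergence (fun _ => C) ?_ ?_
      (integrable_const C) ?_
    · filter_upwards with r
      haveI := my_restrict_fin μ hμ2 r
      have hcint : Continuous fun s : ℝ => ∫ t in Icc (-r) r, g (t + s) ∂μ := by
        refine continuous_of_dominated (bound := fun _ => C) ?_ ?_ (integrable_const C) ?_
        · intro s
          exact ((hg.comp (continuous_add_right s))).aestronglyMeasurable
        · intro s
          filter_upwards with t
          rw [Real.norm_eq_abs, abs_of_nonneg (hgnn _)]
          exact hgC _
        · filter_upwards with t
          exact hg.comp (continuous_add_left t)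
      exact (continuous_const.mul hcint).aestronglyMeasurable
    · filter_upwards with r
      filter_upwards with s
      have hnn : 0 ≤ ∫ t in Icc (-r) r, g (t + s) ∂μ := integral_nonneg fun t => hgnn _
      have h1 : ∫ t in Icc (-r) r, g (t + s) ∂μ ≤ C * (μ (Icc (-r) r)).toReal := by
        have := norm_setIntegral_le_of_norm_le_const (μ := μ) (s := Icc (-r) r)
          (f := fun t => g (t + s)) (C := C) (my_Icc_fin μ hμ2 r)
          (fun x _ => by rw [Real.norm_eq_abs, abs_of_nonneg (hgnn _)]; exact hgC _)
        exact le_trans (le_abs_self _) this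
      rw [Real.norm_eq_abs, abs_of_nonneg (by positivity)]
      rcases eq_or_lt_of_le (ENNReal.toReal_nonneg (a := μ (Icc (-r) r))) with h | h
      · rw [← h]
        simpa using hC0
      · calc (μ (Icc (-r) r)).toReal⁻¹ * ∫ t in Icc (-r) r, g (t + s) ∂μ
            ≤ (μ (Icc (-r) r)).toReal⁻¹ * (C * (μ (Icc (-r) r)).toReal) :=
              mul_le_mul_of_nonneg_left h1 (by positivity)
          _ = C := by field_simp
    · filter_upwards with s
      exact my_translate_ergodic μ hμ1 hμ2 hμM hg hgnn hgC herg s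
  exact hlim.congr fun r => (heq r).symm

lemma my_slide {h : ℝ → ℝ} (hh : Continuous h) :
    Continuous fun t : ℝ => ∫ s in Ioc t (t+1), h s := by
  have hint : ∀ a b : ℝ, IntervalIntegrable h volume a b := fun a b =>
    hh.intervalIntegrable a b
  have heq : ∀ t : ℝ, (∫ s in Ioc t (t+1), h s)
      = (∫ s in (0:ℝ)..(t+1), h s) - ∫ s in (0:ℝ)..t, h s := by
    intro t
    rw [← intervalIntegral.integral_of_le (by linarith : t ≤ t+1),
      ← intervalIntegral.integral_add_adjacent_intervals (hint 0 t) (hint t (t+1))]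
    ring
  have hc := intervalIntegral.continuous_primitive hint 0
  refine Continuous.congr ?_ fun t => (heq t).symm
  exact (hc.comp (continuous_id.add continuous_const)).sub hc

/-- under hypothesis (M), every `μ`-ergodic bounded continuous function is
`μ`-`S^p`-ergodic for every `1 ≤ p < ∞`. -/
theorem classicalErgodic_spErgodic {X : Type*} [NormedAddCommGroup X]
    (μ : Measure ℝ) (hμ1 : μ Set.univ = ⊤)
    (hμ2 : ∀ a b : ℝ, a ≤ b → μ (Icc a b) < ⊤) (hμM : HypM μ)
    (f : ℝ → X) (hcont : Continuous f) (hbdd : ∃ C : ℝ, ∀ t : ℝ, ‖f t‖ ≤ C)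
    (herg : ClassicalErgodic μ f) :
    ∀ p : ℝ, 1 ≤ p → SpErgodic μ p f := by
  intro p hp
  haveI := my_fmc μ hμ2
  obtain ⟨C₀, hC₀⟩ := hbdd
  set C : ℝ := max C₀ 1 with hCdef
  have hC1 : (1:ℝ) ≤ C := le_max_right _ _
  have hC0 : (0:ℝ) < C := lt_of_lt_of_le one_pos hC1
  have hfC : ∀ t, ‖f t‖ ≤ C := fun t => (hC₀ t).trans (le_max_left _ _)
  have hg : Continuous fun t => ‖f t‖ := hcont.norm
  have hgnn : ∀ t : ℝ, (0:ℝ) ≤ ‖f t‖ := fun t => norm_nonneg _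
  have hGerg : Tendsto (fun r : ℝ => (μ (Icc (-r) r)).toReal⁻¹ *
      ∫ t in Icc (-r) r, (∫ s in Ioc t (t+1), ‖f s‖) ∂μ) atTop (nhds 0) :=
    my_G_ergodic μ hμ1 hμ2 hμM hg hgnn hfC herg
  have hM := my_M_tendsto μ hμ1 hμ2
  show Tendsto (fun r : ℝ => (μ (Icc (-r) r)).toReal⁻¹ *
      ∫ t in Icc (-r) r, (∫ s in Ioc t (t + 1), ‖f s‖ ^ p) ^ (1 / p) ∂μ) atTop (nhds 0)
  have hp0 : (0:ℝ) < p := lt_of_lt_of_le one_pos hp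
  set q : ℝ := 1 / p with hq
  have hq0 : 0 < q := by positivity
  have hpq : p * q = 1 := by
    rw [hq]; field_simp
  set G : ℝ → ℝ := fun t => ∫ s in Ioc t (t+1), ‖f s‖ with hG
  set Fp : ℝ → ℝ := fun t => ∫ s in Ioc t (t+1), ‖f s‖ ^ p with hFp
  set F : ℝ → ℝ := fun t => (Fp t) ^ q with hF
  have hgp : Continuous fun s : ℝ => ‖f s‖ ^ p := hg.rpow_const fun x => Or.inr hp0.le
  have hGcont : Continuous G := my_slide hg
  have hFpcont : Continuous Fp := my_slide hgp
  have hFcont : Continuous F := hFpcont.rpow_const fun x => Or.inr hq0.le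
  have hGnn : ∀ t, 0 ≤ G t := fun t => integral_nonneg fun s => hgnn s
  have hGC : ∀ t, G t ≤ C := by
    intro t
    have hvfin : volume (Ioc t (t+1)) < ⊤ := by rw [Real.volume_Ioc]; exact ENNReal.ofReal_lt_top
    have := norm_setIntegral_le_of_norm_le_const (μ := volume) (s := Ioc t (t+1))
      (f := fun s => ‖f s‖) (C := C) hvfin
      (fun x _ => by rw [Real.norm_eq_abs, abs_of_nonneg (hgnn x)]; exact hfC x)
    have hv1 : (volume (Ioc t (t+1))).toReal = 1 := by
      rw [Real.volume_Ioc]; simp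
    rw [measureReal_def, hv1, mul_one] at this
    exact le_trans (le_abs_self _) this
  have hFpnn : ∀ t, 0 ≤ Fp t := fun t =>
    integral_nonneg fun s => Real.rpow_nonneg (norm_nonneg _) p
  have hFnn : ∀ t, 0 ≤ F t := fun t => Real.rpow_nonneg (hFpnn t) q
  have hFpC : ∀ t, Fp t ≤ C ^ p := by
    intro t
    have hvfin : volume (Ioc t (t+1)) < ⊤ := by rw [Real.volume_Ioc]; exact ENNReal.ofReal_lt_top
    have := norm_setIntegral_le_of_norm_le_const (μ := volume) (s := Ioc t (t+1))
      (f := fun s => ‖f s‖ ^ p) (C := C ^ p) hvfin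
      (fun x _ => by
        rw [Real.norm_eq_abs, abs_of_nonneg (Real.rpow_nonneg (norm_nonneg _) p)]
        exact Real.rpow_le_rpow (norm_nonneg _) (hfC x) hp0.le)
    have hv1 : (volume (Ioc t (t+1))).toReal = 1 := by
      rw [Real.volume_Ioc]; simp
    rw [measureReal_def, hv1, mul_one] at this
    exact le_trans (le_abs_self _) this
  have hFC : ∀ t, F t ≤ C := by
    intro t
    have h1 : F t ≤ (C ^ p) ^ q := Real.rpow_le_rpow (hFpnn t) (hFpC t) hq0.le
    rwa [← Real.rpow_mul hC0.le, hpq, Real.rpow_one] at h1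
  have hFpG : ∀ t, Fp t ≤ C ^ (p - 1) * G t := by
    intro t
    have hpt : ∀ s : ℝ, ‖f s‖ ^ p ≤ C ^ (p-1) * ‖f s‖ := by
      intro s
      rcases eq_or_lt_of_le (norm_nonneg (f s)) with h | h
      · rw [← h, Real.zero_rpow hp0.ne']
        positivity
      · have hsplit : ‖f s‖ ^ p = ‖f s‖ ^ (p-1) * ‖f s‖ := by
          conv_lhs => rw [show p = (p-1) + 1 by ring]
          rw [Real.rpow_add h (p-1) 1, Real.rpow_one]
        rw [hsplit]
        exact mul_le_mul_of_nonneg_right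
          (Real.rpow_le_rpow (norm_nonneg _) (hfC s) (by linarith)) (norm_nonneg _)
    calc Fp t ≤ ∫ s in Ioc t (t+1), C ^ (p-1) * ‖f s‖ := by
          refine setIntegral_mono_on ?_ ?_ measurableSet_Ioc fun s _ => hpt s
          · exact hgp.integrableOn_Ioc
          · exact (hg.integrableOn_Ioc).const_mul _
      _ = C ^ (p-1) * G t := by rw [MeasureTheory.integral_const_mul]
  set c₁ : ℝ := (C ^ (p-1)) ^ q with hc₁
  have hc₁0 : 0 < c₁ := Real.rpow_pos_of_pos (Real.rpow_pos_of_pos hC0 _) _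
  have hFcG : ∀ t, F t ≤ c₁ * (G t) ^ q := by
    intro t
    have h1 : F t ≤ (C ^ (p-1) * G t) ^ q :=
      Real.rpow_le_rpow (hFpnn t) (hFpG t) hq0.le
    rwa [Real.mul_rpow (by positivity) (hGnn t)] at h1
  -- final limit argument
  rw [Metric.tendsto_nhds]
  intro ε hε
  set δ : ℝ := (ε / (2 * (c₁ + 1))) ^ p with hδ
  have hbase : 0 < ε / (2 * (c₁ + 1)) := by positivity
  have hδ0 : 0 < δ := Real.rpow_pos_of_pos hbase _
  have hδq : δ ^ q = ε / (2 * (c₁ + 1)) := by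
    rw [hδ, ← Real.rpow_mul hbase.le, hpq, Real.rpow_one]
  have hclaim : ∀ t, F t ≤ ε / 2 + (C / δ) * G t := by
    intro t
    rcases le_or_gt (G t) δ with hle | hlt
    · have h1 : F t ≤ c₁ * δ ^ q := by
        refine le_trans (hFcG t) (mul_le_mul_of_nonneg_left ?_ hc₁0.le)
        exact Real.rpow_le_rpow (hGnn t) hle hq0.le
      have h2 : c₁ * (ε / (2 * (c₁ + 1))) ≤ ε / 2 := by
        have h3 : c₁ * (ε / (2 * (c₁ + 1))) ≤ (c₁ + 1) * (ε / (2 * (c₁ + 1))) :=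
          mul_le_mul_of_nonneg_right (by linarith) hbase.le
        have h4 : (c₁ + 1) * (ε / (2 * (c₁ + 1))) = ε / 2 := by
          field_simp
        linarith
      have h5 : 0 ≤ (C / δ) * G t := by positivity
      rw [hδq] at h1
      linarith
    · have h1 : C ≤ (C / δ) * G t := by
        have h2 : (1:ℝ) ≤ G t / δ := (le_div_iff₀ hδ0).mpr (by linarith)
        calc C = C * 1 := (mul_one C).symm
          _ ≤ C * (G t / δ) := mul_le_mul_of_nonneg_left h2 hC0.le
          _ = (C / δ) * G t := by ring
      have := hFC t
      have h5 : 0 ≤ ε / 2 := by positivity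
      linarith
  -- eventual bound
  have hcv : Tendsto (fun r : ℝ => (C / δ) * ((μ (Icc (-r) r)).toReal⁻¹ *
      ∫ t in Icc (-r) r, G t ∂μ)) atTop (nhds 0) := by
    have := hGerg.const_mul (C / δ)
    simpa using this
  have hev1 : ∀ᶠ r : ℝ in atTop, (C / δ) * ((μ (Icc (-r) r)).toReal⁻¹ *
      ∫ t in Icc (-r) r, G t ∂μ) < ε / 2 :=
    hcv.eventually (eventually_lt_nhds (half_pos hε))
  filter_upwards [hev1, hM.eventually_gt_atTop 0] with r hr1 hMpos
  haveI := my_restrict_fin μ hμ2 r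
  set Mr : ℝ := (μ (Icc (-r) r)).toReal with hMr
  have hFint : IntegrableOn F (Icc (-r) r) μ := hFcont.integrableOn_Icc
  have hGint : IntegrableOn G (Icc (-r) r) μ := hGcont.integrableOn_Icc
  have hint1 : ∫ t in Icc (-r) r, F t ∂μ
      ≤ ∫ t in Icc (-r) r, (ε / 2 + (C / δ) * G t) ∂μ := by
    refine setIntegral_mono_on hFint ?_ measurableSet_Icc fun t _ => hclaim t
    exact (integrable_const _).add (hGint.const_mul _)
  have hsplit : ∫ t in Icc (-r) r, (ε / 2 + (C / δ) * G t) ∂μ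
      = (ε / 2) * Mr + (C / δ) * ∫ t in Icc (-r) r, G t ∂μ := by
    rw [integral_add (integrable_const _) (hGint.const_mul _), setIntegral_const,
      MeasureTheory.integral_const_mul, smul_eq_mul, mul_comm, measureReal_def]
  have hFige : 0 ≤ ∫ t in Icc (-r) r, F t ∂μ := integral_nonneg fun t => hFnn t
  have hGige : 0 ≤ ∫ t in Icc (-r) r, G t ∂μ := integral_nonneg fun t => hGnn t
  have hu : Mr⁻¹ * ∫ t in Icc (-r) r, F t ∂μ
      ≤ ε / 2 + (C / δ) * (Mr⁻¹ * ∫ t in Icc (-r) r, G t ∂μ) := by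
    have step : Mr⁻¹ * ∫ t in Icc (-r) r, F t ∂μ
        ≤ Mr⁻¹ * ((ε / 2) * Mr + (C / δ) * ∫ t in Icc (-r) r, G t ∂μ) :=
      mul_le_mul_of_nonneg_left (hint1.trans_eq hsplit) (by positivity)
    have e1 : Mr⁻¹ * ((ε / 2) * Mr + (C / δ) * ∫ t in Icc (-r) r, G t ∂μ)
        = (ε / 2) * (Mr⁻¹ * Mr) + (C / δ) * (Mr⁻¹ * ∫ t in Icc (-r) r, G t ∂μ) := by ring
    rw [e1, inv_mul_cancel₀ hMpos.ne', mul_one] at step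
    exact step
  rw [Real.dist_eq, sub_zero,
    abs_of_nonneg (mul_nonneg (inv_nonneg.mpr ENNReal.toReal_nonneg) hFige)]
  linarith
end

section
/- Let (T(t))_{t≥0} be a bounded strongly continuous semigroup on a Banach space X, and let δ ∈ AA(ℝ,ℝ) with inf_t δ(t) > 0 and α ∈ AAS^1(ℝ,ℝ). Then the evolution family U(t,s) = exp(∫_s^t α(τ)dτ) · T(∫_s^t δ(τ)dτ), t ≥ s, is bi-almost automorphic: for every real sequence there is a subsequence (s_k) and Ũ such that ‖U(t+s_k, s+s_k)φ - Ũ(t,s)φ‖ → 0 and ‖Ũ(t-s_k, s-s_k)φ - U(t,s)φ‖ → 0 for all t ≥ s and φ ∈ X. -/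
open MeasureTheory Set Filter

/-- (Bochner) almost automorphic functions `ℝ → X`. -/
def AlmostAutomorphic {X : Type*} [NormedAddCommGroup X] (f : ℝ → X) : Prop :=
  Continuous f ∧ ∀ σ : ℕ → ℝ, ∃ φ : ℕ → ℕ, StrictMono φ ∧ ∃ g : ℝ → X,
    MeasureTheory.StronglyMeasurable g ∧
    (∀ t : ℝ, Filter.Tendsto (fun n => f (t + σ (φ n))) Filter.atTop (nhds (g t))) ∧
    (∀ t : ℝ, Filter.Tendsto (fun n => g (t - σ (φ n))) Filter.atTop (nhds (f t)))

/-- Stepanov-`p` almost automorphic functions `ℝ → X` (`AAS^p`). -/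
def SpAlmostAutomorphic {X : Type*} [NormedAddCommGroup X] (p : ℝ) (f : ℝ → X) : Prop :=
  MeasureTheory.AEStronglyMeasurable f (volume : MeasureTheory.Measure ℝ) ∧
  (∀ t : ℝ, MeasureTheory.IntegrableOn (fun s => ‖f s‖ ^ p) (Set.Ioc t (t + 1))) ∧
  ∀ σ : ℕ → ℝ, ∃ φ : ℕ → ℕ, StrictMono φ ∧ ∃ g : ℝ → X,
    MeasureTheory.StronglyMeasurable g ∧
    (∀ t : ℝ, MeasureTheory.IntegrableOn (fun s => ‖g s‖ ^ p) (Set.Ioc t (t + 1))) ∧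
    (∀ t : ℝ, Filter.Tendsto
      (fun n => (∫ s in Set.Ioc t (t + 1), ‖f (s + σ (φ n)) - g s‖ ^ p) ^ (1 / p))
      Filter.atTop (nhds 0)) ∧
    (∀ t : ℝ, Filter.Tendsto
      (fun n => (∫ s in Set.Ioc t (t + 1), ‖g (s - σ (φ n)) - f s‖ ^ p) ^ (1 / p))
      Filter.atTop (nhds 0))





/-- An almost-automorphic-style real function is bounded. -/
lemma aa_bounded {f : ℝ → ℝ}
    (h : ∀ σ : ℕ → ℝ, ∃ φ : ℕ → ℕ, StrictMono φ ∧ ∃ g : ℝ → ℝ,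
      MeasureTheory.StronglyMeasurable g ∧
      (∀ t : ℝ, Filter.Tendsto (fun n => f (t + σ (φ n))) Filter.atTop (nhds (g t))) ∧
      (∀ t : ℝ, Filter.Tendsto (fun n => g (t - σ (φ n))) Filter.atTop (nhds (f t)))) :
    ∃ M : ℝ, ∀ t, |f t| ≤ M := by
  by_contra hB
  push_neg at hB
  choose σ hσ using fun n : ℕ => hB n
  obtain ⟨φ, hφ, g, -, hfor, -⟩ := h σ
  have h1 : Tendsto (fun n => f (0 + σ (φ n))) atTop (nhds (g 0)) := hfor 0
  have h2 : Tendsto (fun n => |f (0 + σ (φ n))|) atTop (nhds |g 0|) := h1.abs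
  have h3 : Tendsto (fun n => |f (0 + σ (φ n))|) atTop atTop := by
    apply tendsto_atTop_mono (fun n => ?_) (tendsto_natCast_atTop_atTop.comp hφ.tendsto_atTop)
    simpa using (hσ (φ n)).le
  exact not_tendsto_nhds_of_tendsto_atTop h3 _ h2

/-- If a function is integrable on every unit interval, it's integrable on every `Ioc`. -/
lemma integrableOn_Ioc_of_unit {g : ℝ → ℝ}
    (h : ∀ u : ℝ, IntegrableOn g (Ioc u (u + 1)) volume) (s t : ℝ) :
    IntegrableOn g (Ioc s t) volume := by
  obtain ⟨N, hN⟩ := exists_nat_ge (t - s)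
  have key : ∀ N : ℕ, IntegrableOn g (Ioc s (s + N)) volume := by
    intro N
    induction N with
    | zero => simp
    | succ n ih =>
        have : Ioc s (s + (n + 1 : ℕ)) = Ioc s (s + n) ∪ Ioc (s + n) (s + n + 1) := by
          rw [Ioc_union_Ioc_eq_Ioc (by linarith [Nat.cast_nonneg (α := ℝ) n]) (by linarith)]
          push_cast; ring_nf
        rw [this]
        exact ih.union (h (s + n))
  exact (key N).mono_set (Ioc_subset_Ioc_right (by linarith))

/-- Splitting an integral over `Ioc s (s+N)` into unit pieces. -/
lemma setIntegral_Ioc_eq_sum {g : ℝ → ℝ}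
    (h : ∀ u : ℝ, IntegrableOn g (Ioc u (u + 1)) volume) (s : ℝ) (N : ℕ) :
    ∫ τ in Ioc s (s + N), g τ = ∑ i ∈ Finset.range N, ∫ τ in Ioc (s + i) ((s + i) + 1), g τ := by
  induction N with
  | zero => simp
  | succ n ih =>
      have hsplit : Ioc s (s + (n + 1 : ℕ)) = Ioc s (s + n) ∪ Ioc (s + n) ((s + n) + 1) := by
        rw [Ioc_union_Ioc_eq_Ioc (by linarith [Nat.cast_nonneg (α := ℝ) n]) (by linarith)]
        push_cast; ring_nf
      rw [hsplit, setIntegral_union (Ioc_disjoint_Ioc_of_le le_rfl) measurableSet_Ioc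
        (integrableOn_Ioc_of_unit h s (s + n)) (h (s + n)), ih,
        Finset.sum_range_succ]

/-- If nonneg functions have unit-interval integrals tending to 0, so do `Ioc s t` integrals. -/
lemma tendsto_setIntegral_Ioc_zero {F : ℕ → ℝ → ℝ}
    (hint : ∀ n, ∀ u : ℝ, IntegrableOn (F n) (Ioc u (u + 1)) volume)
    (hnn : ∀ n τ, 0 ≤ F n τ)
    (h : ∀ u : ℝ, Tendsto (fun n => ∫ τ in Ioc u (u + 1), F n τ) atTop (nhds 0))
    (s t : ℝ) :
    Tendsto (fun n => ∫ τ in Ioc s t, F n τ) atTop (nhds 0) := by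
  obtain ⟨N, hN⟩ := exists_nat_ge (t - s)
  have hsum : Tendsto (fun n => ∑ i ∈ Finset.range N,
      ∫ τ in Ioc (s + i) ((s + i) + 1), F n τ) atTop (nhds 0) := by
    have := tendsto_finset_sum (Finset.range N) (fun i _ => h (s + i))
    simpa using this
  apply squeeze_zero (fun n => setIntegral_nonneg measurableSet_Ioc (fun τ _ => hnn n τ))
    (fun n => ?_) hsum
  rw [← setIntegral_Ioc_eq_sum (hint n) s N]
  exact setIntegral_mono_set (integrableOn_Ioc_of_unit (hint n) s (s + N))
    (Filter.Eventually.of_forall (fun τ => hnn n τ))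
    (HasSubset.Subset.eventuallyLE (Ioc_subset_Ioc_right (by linarith)))

/-- Main L¹-type convergence: unit-interval L¹ convergence gives interval-integral convergence. -/
lemma tendsto_intervalIntegral_of_unit {f : ℕ → ℝ → ℝ} {g : ℝ → ℝ}
    (hfint : ∀ n, ∀ u : ℝ, IntegrableOn (f n) (Ioc u (u + 1)) volume)
    (hgint : ∀ u : ℝ, IntegrableOn g (Ioc u (u + 1)) volume)
    (h : ∀ u : ℝ, Tendsto (fun n => ∫ τ in Ioc u (u + 1), |f n τ - g τ|) atTop (nhds 0))
    (s t : ℝ) (hst : s ≤ t) :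
    Tendsto (fun n => ∫ τ in s..t, f n τ) atTop (nhds (∫ τ in s..t, g τ)) := by
  have habs : Tendsto (fun n => ∫ τ in Ioc s t, |f n τ - g τ|) atTop (nhds 0) :=
    tendsto_setIntegral_Ioc_zero (fun n u => ((hfint n u).sub (hgint u)).abs)
      (fun n τ => abs_nonneg _) h s t
  rw [tendsto_iff_norm_sub_tendsto_zero]
  apply squeeze_zero (fun n => norm_nonneg _) (fun n => ?_) habs
  have hfi : IntervalIntegrable (f n) volume s t :=
    (intervalIntegrable_iff_integrableOn_Ioc_of_le hst).mpr
      (integrableOn_Ioc_of_unit (hfint n) s t)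
  have hgi : IntervalIntegrable g volume s t :=
    (intervalIntegrable_iff_integrableOn_Ioc_of_le hst).mpr
      (integrableOn_Ioc_of_unit hgint s t)
  rw [Real.norm_eq_abs, ← intervalIntegral.integral_sub hfi hgi,
    intervalIntegral.integral_of_le hst]
  calc |∫ τ in Ioc s t, (f n τ - g τ)| ≤ ∫ τ in Ioc s t, ‖f n τ - g τ‖ :=
        by
        rw [← Real.norm_eq_abs]
        exact norm_integral_le_integral_norm _
    _ = ∫ τ in Ioc s t, |f n τ - g τ| := by simp [Real.norm_eq_abs]

/-- Shift unit-interval integrability. -/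
lemma integrableOn_unit_shift {g : ℝ → ℝ}
    (h : ∀ u : ℝ, IntegrableOn g (Ioc u (u + 1)) volume) (r : ℝ) (u : ℝ) :
    IntegrableOn (fun τ => g (τ + r)) (Ioc u (u + 1)) volume := by
  have h1 : IntervalIntegrable g volume (u + r) ((u + r) + 1) :=
    (intervalIntegrable_iff_integrableOn_Ioc_of_le (by linarith)).mpr (h (u + r))
  have h2 := h1.comp_add_right r
  have e1 : u + r - r = u := by ring
  have e2 : u + r + 1 - r = u + 1 := by ring
  rw [e1, e2] at h2
  exact (intervalIntegrable_iff_integrableOn_Ioc_of_le (by linarith)).mp h2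


/-- if `(T(t))_{t≥0}` is a bounded `C₀`-semigroup, `δ ∈ AA(ℝ,ℝ)` with
`inf δ > 0`, and `α ∈ AAS¹(ℝ,ℝ)`, then the evolution family
`U(t,s) = e^{∫_s^t α} T(∫_s^t δ)` is bi-almost automorphic. -/
theorem evolution_family_bi_almostAutomorphic {X : Type*} [NormedAddCommGroup X]
    [NormedSpace ℝ X] (T : ℝ → X →L[ℝ] X)
    (hT0 : T 0 = ContinuousLinearMap.id ℝ X)
    (hTsemi : ∀ a b : ℝ, 0 ≤ a → 0 ≤ b → T (a + b) = (T a).comp (T b))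
    (hTcont : ∀ x : X, ContinuousOn (fun t => T t x) (Ici 0))
    (MT : ℝ) (hMT : ∀ t : ℝ, 0 ≤ t → ‖T t‖ ≤ MT)
    (δ : ℝ → ℝ) (hδaa : AlmostAutomorphic δ) (c : ℝ) (hc : 0 < c) (hδc : ∀ t, c ≤ δ t)
    (α : ℝ → ℝ) (hαloc : LocallyIntegrable α (volume : Measure ℝ))
    (hαaa : SpAlmostAutomorphic 1 α) :
    ∀ σ : ℕ → ℝ, ∃ φ : ℕ → ℕ, StrictMono φ ∧ ∃ V : ℝ → ℝ → X → X,
      ∀ x : X, ∀ s t : ℝ, s ≤ t →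
        Filter.Tendsto (fun n =>
          ‖Real.exp (∫ τ in (s + σ (φ n))..(t + σ (φ n)), α τ) •
              T (∫ τ in (s + σ (φ n))..(t + σ (φ n)), δ τ) x - V t s x‖)
          Filter.atTop (nhds 0) ∧
        Filter.Tendsto (fun n =>
          ‖V (t - σ (φ n)) (s - σ (φ n)) x -
            Real.exp (∫ τ in s..t, α τ) • T (∫ τ in s..t, δ τ) x‖)
          Filter.atTop (nhds 0) := by
  intro σ
  obtain ⟨M, hM⟩ := aa_bounded hδaa.2
  obtain ⟨φ1, hφ1, gδ, hgδm, hδfor, hδback⟩ := hδaa.2 σ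
  obtain ⟨hαmeas, hαint, hαstep⟩ := hαaa
  obtain ⟨φ2, hφ2, gα, hgαm, hgαint1, hαfor1, hαback1⟩ := hαstep (σ ∘ φ1)
  refine ⟨φ1 ∘ φ2, hφ1.comp hφ2,
    fun t s x => Real.exp (∫ τ in s..t, gα τ) • T (∫ τ in s..t, gδ τ) x, ?_⟩
  set r : ℕ → ℝ := fun n => σ (φ1 (φ2 n)) with hr
  -- basic integrability facts
  have hαunit : ∀ u : ℝ, IntegrableOn α (Ioc u (u + 1)) volume := fun u =>
    (hαloc.integrableOn_isCompact isCompact_Icc).mono_set Ioc_subset_Icc_self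
  have hgαunit : ∀ u : ℝ, IntegrableOn gα (Ioc u (u + 1)) volume := by
    intro u
    have h1 := hgαint1 u
    simp only [Real.rpow_one] at h1
    exact (integrable_norm_iff (hgαm.aestronglyMeasurable.restrict)).mp h1
  -- Stepanov limits in simplified form
  have hαfor : ∀ u : ℝ, Tendsto
      (fun n => ∫ τ in Ioc u (u + 1), |α (τ + r n) - gα τ|) atTop (nhds 0) := by
    intro u
    have := hαfor1 u
    simpa [Real.rpow_one, Real.norm_eq_abs] using this
  have hαback : ∀ u : ℝ, Tendsto
      (fun n => ∫ τ in Ioc u (u + 1), |gα (τ - r n) - α τ|) atTop (nhds 0) := by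
    intro u
    have := hαback1 u
    simpa [Real.rpow_one, Real.norm_eq_abs] using this
  -- bounds on gδ
  have hgδM : ∀ u : ℝ, |gδ u| ≤ M := fun u =>
    le_of_tendsto (hδfor u).abs (Filter.Eventually.of_forall fun n => hM _)
  have hgδc : ∀ u : ℝ, c ≤ gδ u := fun u =>
    ge_of_tendsto (hδfor u) (Filter.Eventually.of_forall fun n => hδc _)
  intro x s t hst
  -- T-convergence helper
  have hT : ∀ (b : ℝ) (bn : ℕ → ℝ), 0 ≤ b → (∀ n, 0 ≤ bn n) →
      Tendsto bn atTop (nhds b) →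
      Tendsto (fun n => T (bn n) x) atTop (nhds (T b x)) := by
    intro b bn hb hbn hconv
    have hcw := hTcont x b (mem_Ici.mpr hb)
    exact hcw.tendsto.comp
      (tendsto_nhdsWithin_iff.mpr ⟨hconv, Filter.Eventually.of_forall fun n => hbn n⟩)
  -- δ convergences via dominated convergence
  have hBfor : Tendsto (fun n => ∫ τ in s..t, δ (τ + r n)) atTop
      (nhds (∫ τ in s..t, gδ τ)) := by
    apply intervalIntegral.tendsto_integral_filter_of_dominated_convergence (fun _ => M)
    · exact Filter.Eventually.of_forall fun n =>
        ((hδaa.1.comp (continuous_add_right (r n))).aestronglyMeasurable).restrict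
    · exact Filter.Eventually.of_forall fun n =>
        Filter.Eventually.of_forall fun τ _ => by rw [Real.norm_eq_abs]; exact hM _
    · exact intervalIntegrable_const
    · exact Filter.Eventually.of_forall fun τ _ => (hδfor τ).comp hφ2.tendsto_atTop
  have hBback : Tendsto (fun n => ∫ τ in s..t, gδ (τ - r n)) atTop
      (nhds (∫ τ in s..t, δ τ)) := by
    apply intervalIntegral.tendsto_integral_filter_of_dominated_convergence (fun _ => M)
    · exact Filter.Eventually.of_forall fun n =>
        ((hgδm.comp_measurable (measurable_id.sub_const (r n))).aestronglyMeasurable).restrict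
    · exact Filter.Eventually.of_forall fun n =>
        Filter.Eventually.of_forall fun τ _ => by rw [Real.norm_eq_abs]; exact hgδM _
    · exact intervalIntegrable_const
    · exact Filter.Eventually.of_forall fun τ _ => (hδback τ).comp hφ2.tendsto_atTop
  -- α convergences
  have hAfor : Tendsto (fun n => ∫ τ in s..t, α (τ + r n)) atTop
      (nhds (∫ τ in s..t, gα τ)) :=
    tendsto_intervalIntegral_of_unit (f := fun n τ => α (τ + r n))
      (fun n u => integrableOn_unit_shift hαunit (r n) u) hgαunit hαfor s t hst
  have hAback : Tendsto (fun n => ∫ τ in s..t, gα (τ - r n)) atTop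
      (nhds (∫ τ in s..t, α τ)) :=
    tendsto_intervalIntegral_of_unit (f := fun n τ => gα (τ - r n))
      (fun n u => by
        simpa [sub_eq_add_neg] using integrableOn_unit_shift hgαunit (-(r n)) u)
      hαunit hαback s t hst
  -- nonnegativity of the δ-integrals
  have hδnn : ∀ u : ℝ, (0 : ℝ) ≤ δ u := fun u => hc.le.trans (hδc u)
  have hgδnn : ∀ u : ℝ, (0 : ℝ) ≤ gδ u := fun u => hc.le.trans (hgδc u)
  have hBn_nn : ∀ n, 0 ≤ ∫ τ in s..t, δ (τ + r n) := fun n =>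
    intervalIntegral.integral_nonneg hst fun u _ => hδnn _
  have hB_nn : 0 ≤ ∫ τ in s..t, gδ τ :=
    intervalIntegral.integral_nonneg hst fun u _ => hgδnn _
  have hB'n_nn : ∀ n, 0 ≤ ∫ τ in s..t, gδ (τ - r n) := fun n =>
    intervalIntegral.integral_nonneg hst fun u _ => hgδnn _
  have hB'_nn : 0 ≤ ∫ τ in s..t, δ τ :=
    intervalIntegral.integral_nonneg hst fun u _ => hδnn _
  have e1 : ∀ n, (∫ τ in (s + r n)..(t + r n), α τ) = ∫ τ in s..t, α (τ + r n) := fun n =>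
    (intervalIntegral.integral_comp_add_right α (r n)).symm
  have e2 : ∀ n, (∫ τ in (s + r n)..(t + r n), δ τ) = ∫ τ in s..t, δ (τ + r n) := fun n =>
    (intervalIntegral.integral_comp_add_right δ (r n)).symm
  have e3 : ∀ n, (∫ τ in (s - r n)..(t - r n), gα τ) = ∫ τ in s..t, gα (τ - r n) := fun n =>
    (intervalIntegral.integral_comp_sub_right gα (r n)).symm
  have e4 : ∀ n, (∫ τ in (s - r n)..(t - r n), gδ τ) = ∫ τ in s..t, gδ (τ - r n) := fun n =>
    (intervalIntegral.integral_comp_sub_right gδ (r n)).symm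
  constructor
  · have hmain : Tendsto (fun n =>
        Real.exp (∫ τ in (s + r n)..(t + r n), α τ) •
          T (∫ τ in (s + r n)..(t + r n), δ τ) x) atTop
        (nhds (Real.exp (∫ τ in s..t, gα τ) • T (∫ τ in s..t, gδ τ) x)) := by
      simp only [e1, e2]
      exact ((Real.continuous_exp.tendsto _).comp hAfor).smul
        (hT _ _ hB_nn hBn_nn hBfor)
    exact tendsto_iff_norm_sub_tendsto_zero.mp hmain
  · have hmain : Tendsto (fun n =>
        Real.exp (∫ τ in (s - r n)..(t - r n), gα τ) •
          T (∫ τ in (s - r n)..(t - r n), gδ τ) x) atTop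
        (nhds (Real.exp (∫ τ in s..t, α τ) • T (∫ τ in s..t, δ τ) x)) := by
      simp only [e3, e4]
      exact ((Real.continuous_exp.tendsto _).comp hAback).smul
        (hT _ _ hB'_nn hB'n_nn hBback)
    exact tendsto_iff_norm_sub_tendsto_zero.mp hmain
end

section
/- The measure μ on ℝ with Radon–Nikodym density ρ(t) = e^t for t ≤ 0 and ρ(t) = 1 for t > 0 satisfies: μ(ℝ) = ∞, μ([a,b]) < ∞ for all a ≤ b, and for every τ ∈ ℝ there exist β > 0 and a bounded interval I such that μ(A + τ) ≤ β μ(A) for every Borel set A disjoint from I. -/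
open MeasureTheory Set Filter

private lemma rho_meas : Measurable fun t : ℝ =>
    ENNReal.ofReal (if t ≤ 0 then Real.exp t else 1) :=
  Measurable.ennreal_ofReal (Measurable.ite (measurableSet_le measurable_id measurable_const) Real.measurable_exp
    measurable_const)

private lemma rho_bound (τ x : ℝ) :
    ENNReal.ofReal (if x + τ ≤ 0 then Real.exp (x + τ) else 1)
      ≤ ENNReal.ofReal (Real.exp |τ|) *
        ENNReal.ofReal (if x ≤ 0 then Real.exp x else 1) := by
  rw [← ENNReal.ofReal_mul (Real.exp_pos _).le]
  apply ENNReal.ofReal_le_ofReal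
  rcases le_or_gt (x + τ) 0 with h1 | h1 <;> rcases le_or_gt x 0 with h2 | h2
  · rw [if_pos h1, if_pos h2, ← Real.exp_add]
    exact Real.exp_le_exp.mpr (by linarith [le_abs_self τ])
  · rw [if_pos h1, if_neg (not_le.mpr h2), mul_one]
    exact le_trans (Real.exp_le_one_iff.mpr h1) (Real.one_le_exp (abs_nonneg τ))
  · rw [if_neg (not_le.mpr h1), if_pos h2, ← Real.exp_add]
    exact Real.one_le_exp (by linarith [le_abs_self τ])
  · rw [if_neg (not_le.mpr h1), if_neg (not_le.mpr h2), mul_one]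
    exact Real.one_le_exp (abs_nonneg τ)

/-- the measure `μ` with density `ρ(t) = eᵗ` for `t ≤ 0`, `ρ(t) = 1` for
`t > 0` satisfies `μ(ℝ) = ∞`, `μ([a,b]) < ∞`, and hypothesis (M): for every `τ` there
exist `β > 0` and a bounded interval `I` with `μ(A + τ) ≤ β μ(A)` for all Borel sets `A`
disjoint from `I`. -/
theorem density_measure_satisfies_M :
    (volume.withDensity fun t : ℝ =>
        ENNReal.ofReal (if t ≤ 0 then Real.exp t else 1)) Set.univ = ⊤ ∧
    (∀ a b : ℝ, a ≤ b → (volume.withDensity fun t : ℝ =>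
        ENNReal.ofReal (if t ≤ 0 then Real.exp t else 1)) (Icc a b) < ⊤) ∧
    (∀ τ : ℝ, ∃ β : ℝ, 0 < β ∧ ∃ I : Set ℝ, Bornology.IsBounded I ∧
      ∀ A : Set ℝ, MeasurableSet A → A ∩ I = ∅ →
        (volume.withDensity fun t : ℝ =>
            ENNReal.ofReal (if t ≤ 0 then Real.exp t else 1)) ((fun a => a + τ) '' A) ≤
          ENNReal.ofReal β *
            (volume.withDensity fun t : ℝ =>
              ENNReal.ofReal (if t ≤ 0 then Real.exp t else 1)) A) := by
  refine ⟨?_, ?_, ?_⟩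
  · rw [← top_le_iff]
    have h1 : (volume.withDensity fun t : ℝ =>
        ENNReal.ofReal (if t ≤ 0 then Real.exp t else 1)) (Ioi 0) = ⊤ := by
      rw [withDensity_apply _ measurableSet_Ioi]
      have heq : ∀ x ∈ Ioi (0:ℝ),
          ENNReal.ofReal (if x ≤ 0 then Real.exp x else 1) = 1 := by
        intro x hx
        rw [if_neg (not_le.mpr hx), ENNReal.ofReal_one]
      rw [setLIntegral_congr_fun measurableSet_Ioi heq,
        setLIntegral_one, Real.volume_Ioi]
    exact h1 ▸ measure_mono (subset_univ _)
  · intro a b _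
    calc (volume.withDensity fun t : ℝ =>
          ENNReal.ofReal (if t ≤ 0 then Real.exp t else 1)) (Icc a b)
        = ∫⁻ x in Icc a b, ENNReal.ofReal (if x ≤ 0 then Real.exp x else 1) :=
          withDensity_apply _ measurableSet_Icc
      _ ≤ ∫⁻ _x in Icc a b, 1 := by
          refine lintegral_mono fun x => ?_
          split_ifs with h
          · exact ENNReal.ofReal_le_one.mpr (Real.exp_le_one_iff.mpr h)
          · simp
      _ = volume (Icc a b) := setLIntegral_one _
      _ < ⊤ := measure_Icc_lt_top
  · intro τ
    refine ⟨Real.exp |τ|, Real.exp_pos _, ∅, Bornology.isBounded_empty, ?_⟩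
    intro A hA _
    have hmeasA' : MeasurableSet ((fun a => a + τ) '' A) := by
      rw [Set.image_add_right]
      exact (measurable_add_const (-τ)) hA
    rw [withDensity_apply _ hmeasA', withDensity_apply _ hA]
    have hmp : MeasurePreserving (fun a : ℝ => a + τ) volume volume :=
      measurePreserving_add_right volume τ
    have key : ∫⁻ x in (fun a => a + τ) '' A,
          ENNReal.ofReal (if x ≤ 0 then Real.exp x else 1) ∂volume
        = ∫⁻ x in A, ENNReal.ofReal (if x + τ ≤ 0 then Real.exp (x + τ) else 1)
            ∂volume := by
      conv_lhs => rw [← hmp.map_eq]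
      rw [setLIntegral_map hmeasA' rho_meas (measurable_add_const τ),
        Set.preimage_image_eq _ (add_left_injective τ)]
    rw [key]
    calc ∫⁻ x in A, ENNReal.ofReal (if x + τ ≤ 0 then Real.exp (x + τ) else 1)
        ≤ ∫⁻ x in A, ENNReal.ofReal (Real.exp |τ|) *
            ENNReal.ofReal (if x ≤ 0 then Real.exp x else 1) :=
          lintegral_mono fun x => rho_bound τ x
      _ = ENNReal.ofReal (Real.exp |τ|) *
            ∫⁻ x in A, ENNReal.ofReal (if x ≤ 0 then Real.exp x else 1) :=
          lintegral_const_mul _ rho_meas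
end

section
/- Let M, δ > 0, p > 1 with conjugate q, and g ∈ BS^p(ℝ,X). For k ≥ 1 define u_k(t) = ∫_{t-k}^{t-k+1} U(t,s)P(s)g(s)ds - ∫_{t+k-1}^{t+k} Ũ(t,s)Q(s)g(s)ds, where the dichotomy estimates ‖U(t,s)P(s)‖ ≤ Me^{-δ(t-s)} (s ≤ t) and ‖Ũ(t,s)Q(t)‖ ≤ Me^{-δ(s-t)} (s > t) hold. Then ‖u_k(t)‖ ≤ 2M ‖g‖_{BS^p} ((e^{δq}-1)/(δq))^{1/q} e^{-δk} for all t ∈ ℝ, and consequently the series Σ_{k≥1} u_k converges uniformly on ℝ. -/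
open MeasureTheory Set Filter
open scoped ENNReal NNReal

lemma int_exp (c b x y : ℝ) (hc : c ≠ 0) (hxy : x ≤ y) :
    ∫ s in Ioc x y, Real.exp (c * s + b) =
      (Real.exp (c * y + b) - Real.exp (c * x + b)) / c := by
  rw [← intervalIntegral.integral_of_le hxy]
  have hderiv : ∀ s ∈ Set.uIcc x y,
      HasDerivAt (fun u => Real.exp (c * u + b) / c) (Real.exp (c * s + b)) s := by
    intro s _
    have h1 : HasDerivAt (fun u : ℝ => c * u + b) c s := by
      simpa using ((hasDerivAt_id s).const_mul c).add_const b
    have h3 := ((Real.hasDerivAt_exp (c * s + b)).comp s h1).div_const c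
    rw [mul_div_cancel_right₀ _ hc] at h3
    exact h3
  rw [intervalIntegral.integral_eq_sub_of_hasDerivAt hderiv
    ((Real.continuous_exp.comp (by continuity)).intervalIntegrable x y)]
  ring

lemma holder_piece {X : Type*} [NormedAddCommGroup X] [NormedSpace ℝ X] [CompleteSpace X]
    {p q C M : ℝ} (hp : 1 < p) (hpq : 1 / p + 1 / q = 1) (hC0 : 0 ≤ C) (hM : 0 < M)
    {g : ℝ → X} (hmeas : AEStronglyMeasurable g (volume : Measure ℝ))
    {a : ℝ} (hloc : IntegrableOn (fun s => ‖g s‖ ^ p) (Ioc a (a + 1)))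
    (hC : (∫ s in Ioc a (a + 1), ‖g s‖ ^ p) ^ (1 / p) ≤ C)
    {F : ℝ → X} {c b : ℝ} (hcq : c * q ≠ 0)
    (hF : ∀ s ∈ Ioc a (a + 1), ‖F s‖ ≤ M * (‖g s‖ * Real.exp (c * s + b))) :
    ‖∫ s in Ioc a (a + 1), F s‖ ≤
      M * C * ((Real.exp ((c * q) * (a + 1) + b * q) -
        Real.exp ((c * q) * a + b * q)) / (c * q)) ^ (1 / q) := by
  have hcon : p.HolderConjugate q := Real.holderConjugate_iff.mpr ⟨hp, by simpa [one_div] using hpq⟩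
  have hp0 : 0 < p := hcon.pos
  have hq0 : 0 < q := hcon.symm.pos
  set φ : ℝ → ℝ := fun s => Real.exp (c * s + b) with hφ
  have hφcont : Continuous φ := Real.continuous_exp.comp (by continuity)
  have hφq : (fun s => ‖φ s‖ ^ q) = fun s => Real.exp ((c * q) * s + b * q) := by
    funext s
    rw [Real.norm_of_nonneg (Real.exp_pos _).le, ← Real.exp_mul]
    exact congrArg Real.exp (by ring)
  have hgmem : MemLp g (ENNReal.ofReal p) (volume.restrict (Ioc a (a + 1))) := by
    rw [← memLp_norm_rpow_iff (q := ENNReal.ofReal p) hmeas.restrict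
      (by simp [ENNReal.ofReal_eq_zero, not_le, hp0]) ENNReal.ofReal_ne_top]
    rw [ENNReal.toReal_ofReal hp0.le, ENNReal.div_self
      (by simp [ENNReal.ofReal_eq_zero, not_le, hp0]) ENNReal.ofReal_ne_top]
    exact memLp_one_iff_integrable.2 hloc
  have hgnorm : MemLp (fun s => ‖g s‖) (ENNReal.ofReal p)
      (volume.restrict (Ioc a (a + 1))) := hgmem.norm
  have hφmem : MemLp φ (ENNReal.ofReal q) (volume.restrict (Ioc a (a + 1))) := by
    rw [← memLp_norm_rpow_iff (q := ENNReal.ofReal q) hφcont.aestronglyMeasurable.restrict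
      (by simp [ENNReal.ofReal_eq_zero, not_le, hq0]) ENNReal.ofReal_ne_top]
    rw [ENNReal.toReal_ofReal hq0.le, ENNReal.div_self
      (by simp [ENNReal.ofReal_eq_zero, not_le, hq0]) ENNReal.ofReal_ne_top]
    apply memLp_one_iff_integrable.2
    rw [hφq]
    exact (Real.continuous_exp.comp (by continuity)).integrableOn_Ioc
  have hprod : Integrable (fun s => ‖g s‖ * φ s) (volume.restrict (Ioc a (a + 1))) := by
    have hpqr : (1 : ℝ≥0∞) / 1 = 1 / ENNReal.ofReal q + 1 / ENNReal.ofReal p := by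
      rw [one_div, one_div, one_div, inv_one, ← ENNReal.ofReal_inv_of_pos hq0,
        ← ENNReal.ofReal_inv_of_pos hp0, ← ENNReal.ofReal_add (by positivity) (by positivity),
        ← ENNReal.ofReal_one]
      congr 1
      rw [← hpq, one_div, one_div]
      ring
    have := memLp_one_iff_integrable.1 (MemLp.smul hgnorm hφmem (hpqr := ⟨by simpa [one_div] using hpqr.symm⟩))
    simpa [Pi.smul_apply, smul_eq_mul, mul_comm, Pi.mul_def] using this
  have hBnn : (0 : ℝ) ≤ (∫ s in Ioc a (a + 1), φ s ^ q) ^ (1 / q) :=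
    Real.rpow_nonneg (integral_nonneg fun s => Real.rpow_nonneg (Real.exp_pos _).le q) _
  have key : ‖∫ s in Ioc a (a + 1), F s‖ ≤
      M * C * (∫ s in Ioc a (a + 1), φ s ^ q) ^ (1 / q) := by
    calc ‖∫ s in Ioc a (a + 1), F s‖ ≤ ∫ s in Ioc a (a + 1), ‖F s‖ :=
          norm_integral_le_integral_norm _
      _ ≤ ∫ s in Ioc a (a + 1), M * (‖g s‖ * φ s) := by
          refine integral_mono_of_nonneg (Eventually.of_forall fun s => norm_nonneg _)
            (hprod.const_mul M) ?_
          filter_upwards [ae_restrict_mem measurableSet_Ioc] with s hs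
          exact hF s hs
      _ = M * ∫ s in Ioc a (a + 1), ‖g s‖ * φ s := integral_const_mul M _
      _ ≤ M * ((∫ s in Ioc a (a + 1), ‖g s‖ ^ p) ^ (1 / p) *
            (∫ s in Ioc a (a + 1), φ s ^ q) ^ (1 / q)) := by
          refine mul_le_mul_of_nonneg_left ?_ hM.le
          exact integral_mul_le_Lp_mul_Lq_of_nonneg hcon
            (Eventually.of_forall fun s => norm_nonneg _)
            (Eventually.of_forall fun s => (Real.exp_pos _).le) hgnorm hφmem
      _ ≤ M * (C * (∫ s in Ioc a (a + 1), φ s ^ q) ^ (1 / q)) := by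
          exact mul_le_mul_of_nonneg_left (mul_le_mul_of_nonneg_right hC hBnn) hM.le
      _ = M * C * (∫ s in Ioc a (a + 1), φ s ^ q) ^ (1 / q) := (mul_assoc _ _ _).symm
  have hval : ∫ s in Ioc a (a + 1), φ s ^ q =
      (Real.exp ((c * q) * (a + 1) + b * q) - Real.exp ((c * q) * a + b * q)) / (c * q) := by
    have : (fun s => φ s ^ q) = fun s => Real.exp ((c * q) * s + b * q) := by
      funext s
      rw [hφ, ← Real.exp_mul]
      exact congrArg Real.exp (by ring)
    rw [this, int_exp (c * q) (b * q) a (a + 1) hcq (by linarith)]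
  rwa [hval] at key

/-- A strongly continuous evolution family on a Banach space `X` which has an
exponential dichotomy on `ℝ`, with projections `P t`, constants `M, δ > 0`,
and the inverses `Utilde t s` (for `t ≤ s`) of `U s t` on the ranges of `Q = 1 - P`. -/
structure ExpDichotomyFamily (X : Type*) [NormedAddCommGroup X] [NormedSpace ℝ X] where
  U : ℝ → ℝ → X →L[ℝ] X
  Utilde : ℝ → ℝ → X →L[ℝ] X
  P : ℝ → X →L[ℝ] X
  M : ℝ
  δ : ℝ
  M_pos : 0 < M
  δ_pos : 0 < δ
  comp : ∀ {t r s : ℝ}, s ≤ r → r ≤ t → (U t r).comp (U r s) = U t s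
  idm : ∀ t : ℝ, U t t = ContinuousLinearMap.id ℝ X
  strong_cont : ∀ x : X, ContinuousOn (fun pr : ℝ × ℝ => U pr.1 pr.2 x) {pr | pr.2 ≤ pr.1}
  proj : ∀ t : ℝ, (P t).comp (P t) = P t
  P_cont : ∀ x : X, Continuous fun t => P t x
  commute : ∀ {t s : ℝ}, s ≤ t → (U t s).comp (P s) = (P t).comp (U t s)
  inv₁ : ∀ {t s : ℝ}, t ≤ s → ∀ x : X, U s t (Utilde t s ((1 - P s) x)) = (1 - P s) x
  inv₂ : ∀ {t s : ℝ}, t ≤ s → ∀ x : X, Utilde t s (U s t ((1 - P t) x)) = (1 - P t) x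
  range_tilde : ∀ {t s : ℝ}, t ≤ s → ∀ x : X,
    Utilde t s ((1 - P s) x) = (1 - P t) (Utilde t s ((1 - P s) x))
  bound₁ : ∀ {t s : ℝ}, s ≤ t → ‖(U t s).comp (P s)‖ ≤ M * Real.exp (-δ * (t - s))
  bound₂ : ∀ {t s : ℝ}, t ≤ s → ‖(Utilde t s).comp (1 - P s)‖ ≤ M * Real.exp (-δ * (s - t))

/-- The Green's function associated to a hyperbolic evolution family:
`Γ(t,s) = U(t,s)P(s)` for `s ≤ t` and `Γ(t,s) = -Ũ(t,s)Q(s)` for `s > t`. -/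
noncomputable def ExpDichotomyFamily.Green {X : Type*} [NormedAddCommGroup X]
    [NormedSpace ℝ X] (E : ExpDichotomyFamily X) (t s : ℝ) : X →L[ℝ] X :=
  if s ≤ t then (E.U t s).comp (E.P s) else -((E.Utilde t s).comp (1 - E.P s))


/-- for `g ∈ BS^p(ℝ,X)` (`p > 1`, conjugate `q`), the pieces
`u_k(t) = ∫_{t-k}^{t-k+1} U(t,s)P(s)g(s)ds - ∫_{t+k-1}^{t+k} Ũ(t,s)Q(s)g(s)ds` satisfy
`‖u_k(t)‖ ≤ 2M ‖g‖_{BS^p} ((e^{δq}-1)/(δq))^{1/q} e^{-δk}`, and the series `Σ_{k≥1} u_k`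
converges uniformly on `ℝ`. -/
theorem green_pieces_bound_and_uniform_convergence {X : Type*} [NormedAddCommGroup X]
    [NormedSpace ℝ X] [CompleteSpace X] (E : ExpDichotomyFamily X)
    (p q C : ℝ) (hp : 1 < p) (hpq : 1 / p + 1 / q = 1) (hC0 : 0 ≤ C)
    (g : ℝ → X) (hmeas : AEStronglyMeasurable g (volume : Measure ℝ))
    (hloc : ∀ t : ℝ, IntegrableOn (fun s => ‖g s‖ ^ p) (Ioc t (t + 1)))
    (hC : ∀ t : ℝ, (∫ s in Ioc t (t + 1), ‖g s‖ ^ p) ^ (1 / p) ≤ C)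
    (u : ℕ → ℝ → X)
    (hu : ∀ k : ℕ, ∀ t : ℝ, u k t =
      (∫ s in Ioc (t - k) (t - k + 1), E.U t s (E.P s (g s))) -
        ∫ s in Ioc (t + k - 1) (t + k), E.Utilde t s ((1 - E.P s) (g s))) :
    (∀ k : ℕ, 1 ≤ k → ∀ t : ℝ, ‖u k t‖ ≤
      2 * E.M * C * ((Real.exp (E.δ * q) - 1) / (E.δ * q)) ^ (1 / q) *
        Real.exp (-E.δ * k)) ∧
    ∃ v : ℝ → X, TendstoUniformly
      (fun n : ℕ => fun t : ℝ => ∑ k ∈ Finset.Icc 1 n, u k t) v atTop := by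
  have hcon : p.HolderConjugate q := Real.holderConjugate_iff.mpr ⟨hp, by simpa [one_div] using hpq⟩
  have hq0 : 0 < q := hcon.symm.pos
  have hδ := E.δ_pos
  have hM := E.M_pos
  have hδq : 0 < E.δ * q := by positivity
  set D : ℝ := ((Real.exp (E.δ * q) - 1) / (E.δ * q)) ^ (1 / q) with hD
  have hDnum : 0 ≤ (Real.exp (E.δ * q) - 1) / (E.δ * q) :=
    div_nonneg (by linarith [Real.one_le_exp hδq.le]) hδq.le
  have hD0 : 0 ≤ D := Real.rpow_nonneg hDnum _
  have part1 : ∀ k : ℕ, 1 ≤ k → ∀ t : ℝ, ‖u k t‖ ≤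
      2 * E.M * C * D * Real.exp (-E.δ * k) := by
    intro k hk t
    have hk1 : (1 : ℝ) ≤ (k : ℝ) := by exact_mod_cast hk
    -- first piece
    have hF1 : ∀ s ∈ Ioc (t - (k:ℝ)) (t - (k:ℝ) + 1),
        ‖E.U t s (E.P s (g s))‖ ≤ E.M * (‖g s‖ * Real.exp (E.δ * s + (-E.δ * t))) := by
      intro s hs
      have hst : s ≤ t := by linarith [hs.2]
      have h1 : ‖E.U t s (E.P s (g s))‖ ≤ ‖(E.U t s).comp (E.P s)‖ * ‖g s‖ :=
        ((E.U t s).comp (E.P s)).le_opNorm (g s)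
      have h2 := mul_le_mul_of_nonneg_right (E.bound₁ hst) (norm_nonneg (g s))
      calc ‖E.U t s (E.P s (g s))‖ ≤ ‖(E.U t s).comp (E.P s)‖ * ‖g s‖ := h1
        _ ≤ E.M * Real.exp (-E.δ * (t - s)) * ‖g s‖ := h2
        _ = E.M * (‖g s‖ * Real.exp (E.δ * s + (-E.δ * t))) := by
            rw [show -E.δ * (t - s) = E.δ * s + (-E.δ * t) by ring]; ring
    have hb1 := holder_piece hp hpq hC0 hM hmeas (hloc (t - k))
      (hC (t - k)) (c := E.δ) (b := -E.δ * t) (ne_of_gt hδq) hF1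
    have hv1 : ((Real.exp ((E.δ * q) * (t - (k:ℝ) + 1) + (-E.δ * t) * q) -
        Real.exp ((E.δ * q) * (t - (k:ℝ)) + (-E.δ * t) * q)) / (E.δ * q)) ^ (1 / q) =
        Real.exp (-E.δ * k) * D := by
      rw [show (E.δ * q) * (t - (k:ℝ) + 1) + (-E.δ * t) * q
            = E.δ * q + (-(E.δ * q) * (k:ℝ)) by ring,
          show (E.δ * q) * (t - (k:ℝ)) + (-E.δ * t) * q = -(E.δ * q) * (k:ℝ) by ring,
          Real.exp_add,
          show (Real.exp (E.δ * q) * Real.exp (-(E.δ * q) * (k:ℝ)) -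
              Real.exp (-(E.δ * q) * (k:ℝ))) / (E.δ * q)
            = Real.exp (-(E.δ * q) * (k:ℝ)) * ((Real.exp (E.δ * q) - 1) / (E.δ * q)) by
            field_simp,
          Real.mul_rpow (Real.exp_pos _).le hDnum]
      congr 1
      rw [← Real.exp_mul]
      exact congrArg Real.exp (by field_simp)
    rw [hv1] at hb1
    -- second piece
    have hF2 : ∀ s ∈ Ioc (t + (k:ℝ) - 1) (t + (k:ℝ) - 1 + 1),
        ‖E.Utilde t s ((1 - E.P s) (g s))‖ ≤
          E.M * (‖g s‖ * Real.exp (-E.δ * s + (E.δ * t))) := by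
      intro s hs
      have hst : t ≤ s := by
        have := hs.1
        linarith
      have h1 : ‖E.Utilde t s ((1 - E.P s) (g s))‖ ≤
          ‖(E.Utilde t s).comp (1 - E.P s)‖ * ‖g s‖ :=
        ((E.Utilde t s).comp (1 - E.P s)).le_opNorm (g s)
      have h2 := mul_le_mul_of_nonneg_right (E.bound₂ hst) (norm_nonneg (g s))
      calc ‖E.Utilde t s ((1 - E.P s) (g s))‖
          ≤ ‖(E.Utilde t s).comp (1 - E.P s)‖ * ‖g s‖ := h1
        _ ≤ E.M * Real.exp (-E.δ * (s - t)) * ‖g s‖ := h2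
        _ = E.M * (‖g s‖ * Real.exp (-E.δ * s + (E.δ * t))) := by
            rw [show -E.δ * (s - t) = -E.δ * s + (E.δ * t) by ring]; ring
    have hb2 := holder_piece hp hpq hC0 hM hmeas (hloc (t + k - 1))
      (hC (t + k - 1)) (c := -E.δ) (b := E.δ * t)
      (by rw [neg_mul]; exact neg_ne_zero.2 (ne_of_gt hδq)) hF2
    have hv2 : ((Real.exp ((-E.δ * q) * (t + (k:ℝ) - 1 + 1) + (E.δ * t) * q) -
        Real.exp ((-E.δ * q) * (t + (k:ℝ) - 1) + (E.δ * t) * q)) / (-E.δ * q)) ^ (1 / q) =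
        Real.exp (-E.δ * k) * D := by
      rw [show (-E.δ * q) * (t + (k:ℝ) - 1 + 1) + (E.δ * t) * q
            = -(E.δ * q) * (k:ℝ) by ring,
          show (-E.δ * q) * (t + (k:ℝ) - 1) + (E.δ * t) * q
            = E.δ * q + (-(E.δ * q) * (k:ℝ)) by ring,
          Real.exp_add,
          show (Real.exp (-(E.δ * q) * (k:ℝ)) -
              Real.exp (E.δ * q) * Real.exp (-(E.δ * q) * (k:ℝ))) / (-E.δ * q)
            = Real.exp (-(E.δ * q) * (k:ℝ)) * ((Real.exp (E.δ * q) - 1) / (E.δ * q)) by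
            field_simp; ring,
          Real.mul_rpow (Real.exp_pos _).le hDnum]
      congr 1
      rw [← Real.exp_mul]
      exact congrArg Real.exp (by field_simp)
    rw [hv2, show (t + (k:ℝ) - 1) + 1 = t + (k:ℝ) by ring] at hb2
    rw [hu k t]
    calc ‖(∫ s in Ioc (t - (k:ℝ)) (t - (k:ℝ) + 1), E.U t s (E.P s (g s))) -
          ∫ s in Ioc (t + (k:ℝ) - 1) (t + (k:ℝ)), E.Utilde t s ((1 - E.P s) (g s))‖
        ≤ ‖∫ s in Ioc (t - (k:ℝ)) (t - (k:ℝ) + 1), E.U t s (E.P s (g s))‖ +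
          ‖∫ s in Ioc (t + (k:ℝ) - 1) (t + (k:ℝ)),
            E.Utilde t s ((1 - E.P s) (g s))‖ := norm_sub_le _ _
      _ ≤ E.M * C * (Real.exp (-E.δ * k) * D) + E.M * C * (Real.exp (-E.δ * k) * D) :=
          add_le_add hb1 hb2
      _ = 2 * E.M * C * D * Real.exp (-E.δ * k) := by ring
  refine ⟨part1, ?_⟩
  -- uniform convergence
  set w : ℕ → ℝ := fun n => 2 * E.M * C * D * Real.exp (-E.δ * ((n : ℝ) + 1)) with hw
  have hwsum : Summable w := by
    have : w = fun n => (2 * E.M * C * D * Real.exp (-E.δ)) * Real.exp (-E.δ) ^ n := by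
      funext n
      show 2 * E.M * C * D * Real.exp (-E.δ * ((n : ℝ) + 1)) = _
      rw [show -E.δ * ((n : ℝ) + 1) = -E.δ + (n : ℝ) * (-E.δ) by ring, Real.exp_add,
        Real.exp_nat_mul]
      ring
    rw [this]
    exact (summable_geometric_of_lt_one (Real.exp_pos _).le
      (Real.exp_lt_one_iff.2 (by linarith))).mul_left _
  have hT := tendstoUniformly_tsum_nat (f := fun n t => u (n + 1) t) hwsum
    (fun n t => by
      have := part1 (n + 1) (Nat.le_add_left 1 n) t
      rw [hw]
      simpa [Nat.cast_add, Nat.cast_one] using this)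
  refine ⟨fun t => ∑' n, u (n + 1) t, ?_⟩
  have heq : (fun n : ℕ => fun t : ℝ => ∑ k ∈ Finset.Icc 1 n, u k t) =
      fun N : ℕ => fun t : ℝ => ∑ n ∈ Finset.range N, u (n + 1) t := by
    funext N t
    rw [← Finset.Ico_add_one_right_eq_Icc, Finset.sum_Ico_eq_sum_range]
    simp [add_comm]
  rw [heq]
  exact hT
end
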